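/- arXiv:2412.16347 — 4 statements merged into one kernel-verified Lean document; each statement's English description precedes it below -/
import Mathlib

section
/- Consider an LTV system on an open interval I ⊆ ℝ with coefficients A, B, C, D, and assume that for every t0 ∈ I, x0 ∈ ℂ^n, and u ∈ L²_loc(I, ℂ^m) there exists a state-input-output solution (x,u,y) with x(t0) = x0. If the system is passive with storage function V, then for every t0 ∈ I and x0 ∈ ℂ^n the supply set S(t0,x0) := { −∫_{t0}^{t1} Re(y(t)* u(t)) dt : t1 ∈ I, t1 ≥ t0, (x,u,y) a state-input-output solution with x(t0) = x0 } is nonempty, contains 0, and is bounded above by V(t0,x0); consequently the available storage V_a(t0,x0) := sup S(t0,x0) satisfies 0 ≤ V_a(t0,x0) ≤ V(t0,x0) < ∞ for every storage function V of the system. -/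
open MeasureTheory Matrix Set Filter Topology
open scoped ComplexOrder ENNReal

namespace Paper

/-- Loewner order `M ≤ N`, i.e. `N - M` is positive semidefinite. -/
def LoewnerLE {n : ℕ} (M N : Matrix (Fin n) (Fin n) ℂ) : Prop := (N - M).PosSemidef

/-- Entrywise (Bochner) interval integral of a matrix-valued function. -/
noncomputable def matInt {k l : ℕ} (G : ℝ → Matrix (Fin k) (Fin l) ℂ) (r s : ℝ) :
    Matrix (Fin k) (Fin l) ℂ :=
  Matrix.of fun i j => ∫ t in r..s, G t i j

/-- `Q` is absolutely upper semicontinuous on `[a,b]`: there is a Bochner-integrable,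
pointwise Hermitian `G` with `Q s - Q r ≤ ∫_r^s G` in the Loewner order. -/
def IsAUCOn {n : ℕ} (Q : ℝ → Matrix (Fin n) (Fin n) ℂ) (a b : ℝ) : Prop :=
  ∃ G : ℝ → Matrix (Fin n) (Fin n) ℂ,
    (∀ t, (G t).IsHermitian) ∧
    (∀ i j, IntegrableOn (fun t => G t i j) (Icc a b)) ∧
    ∀ r s : ℝ, a ≤ r → r ≤ s → s ≤ b → LoewnerLE (Q s - Q r) (matInt G r s)

/-- A matrix-valued function is locally `L^p` on `I` (entrywise, on compact subintervals). -/
def MemLocLp {k l : ℕ} (p : ℝ≥0∞) (I : Set ℝ) (F : ℝ → Matrix (Fin k) (Fin l) ℂ) : Prop :=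
  ∀ a b : ℝ, a ∈ I → b ∈ I → ∀ i j, MemLp (fun t => F t i j) p (volume.restrict (Icc a b))

/-- A vector-valued function is locally `L^p` on `I`. -/
def VecMemLocLp {k : ℕ} (p : ℝ≥0∞) (I : Set ℝ) (f : ℝ → Fin k → ℂ) : Prop :=
  ∀ a b : ℝ, a ∈ I → b ∈ I → ∀ i, MemLp (fun t => f t i) p (volume.restrict (Icc a b))

/-- `x` is locally absolutely continuous on `I` with (a.e.) derivative `x'`. -/
def VecLocAC {k : ℕ} (I : Set ℝ) (x x' : ℝ → Fin k → ℂ) : Prop :=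
  (∀ a b : ℝ, a ∈ I → b ∈ I → ∀ i, IntegrableOn (fun t => x' t i) (Icc a b)) ∧
  ∀ s t : ℝ, s ∈ I → t ∈ I → ∀ i, x t i = x s i + ∫ τ in s..t, x' τ i

/-- A matrix function is locally absolutely continuous on `I` with (a.e.) derivative `X'`. -/
def MatLocAC {k l : ℕ} (I : Set ℝ) (X X' : ℝ → Matrix (Fin k) (Fin l) ℂ) : Prop :=
  (∀ a b : ℝ, a ∈ I → b ∈ I → ∀ i j, IntegrableOn (fun t => X' t i j) (Icc a b)) ∧
  ∀ s t : ℝ, s ∈ I → t ∈ I → ∀ i j, X t i j = X s i j + ∫ τ in s..t, X' τ i j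

/-- The coefficients of an LTV system lie in the appropriate local Lebesgue spaces. -/
def IsLTV {n m : ℕ} (I : Set ℝ)
    (A : ℝ → Matrix (Fin n) (Fin n) ℂ) (B : ℝ → Matrix (Fin n) (Fin m) ℂ)
    (C : ℝ → Matrix (Fin m) (Fin n) ℂ) (D : ℝ → Matrix (Fin m) (Fin m) ℂ) : Prop :=
  MemLocLp 1 I A ∧ MemLocLp 2 I B ∧ MemLocLp 2 I C ∧ MemLocLp ⊤ I D

/-- `(x, u, y)` is a state-input-output solution of the LTV system on `I`. -/
def IsSIOSol {n m : ℕ} (I : Set ℝ)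
    (A : ℝ → Matrix (Fin n) (Fin n) ℂ) (B : ℝ → Matrix (Fin n) (Fin m) ℂ)
    (C : ℝ → Matrix (Fin m) (Fin n) ℂ) (D : ℝ → Matrix (Fin m) (Fin m) ℂ)
    (x : ℝ → Fin n → ℂ) (u y : ℝ → Fin m → ℂ) : Prop :=
  VecMemLocLp 2 I u ∧ VecMemLocLp 2 I y ∧
  (∃ x', VecLocAC I x x' ∧ ∀ᵐ t ∂volume, t ∈ I → x' t = A t *ᵥ x t + B t *ᵥ u t) ∧
  ∀ᵐ t ∂volume, t ∈ I → y t = C t *ᵥ x t + D t *ᵥ u t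

/-- The supplied energy `∫_{t0}^{t1} Re (y(t)^* u(t)) dt`. -/
noncomputable def supply {k : ℕ} (u y : ℝ → Fin k → ℂ) (t0 t1 : ℝ) : ℝ :=
  ∫ t in t0..t1, (star (y t) ⬝ᵥ u t).re

/-- `V` is a storage function for the LTV system on `I`. -/
def IsStorage {n m : ℕ} (I : Set ℝ)
    (A : ℝ → Matrix (Fin n) (Fin n) ℂ) (B : ℝ → Matrix (Fin n) (Fin m) ℂ)
    (C : ℝ → Matrix (Fin m) (Fin n) ℂ) (D : ℝ → Matrix (Fin m) (Fin m) ℂ)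
    (V : ℝ → (Fin n → ℂ) → ℝ) : Prop :=
  (∀ t ∈ I, ∀ x, 0 ≤ V t x) ∧ (∀ t ∈ I, V t 0 = 0) ∧
  ∀ x u y, IsSIOSol I A B C D x u y → ∀ t0 t1 : ℝ, t0 ∈ I → t1 ∈ I → t0 ≤ t1 →
    V t1 (x t1) - V t0 (x t0) ≤ supply u y t0 t1

/-- The quadratic storage function candidate `V_Q(t, x) = ½ x^* Q(t) x`. -/
noncomputable def quadStorage {k : ℕ} (Q : ℝ → Matrix (Fin k) (Fin k) ℂ) :
    ℝ → (Fin k → ℂ) → ℝ :=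
  fun t x => (1 / 2 : ℝ) * (star x ⬝ᵥ (Q t *ᵥ x)).re

/-- `X` is a fundamental solution matrix for `A` anchored at `t0`. -/
def IsFundamental {n : ℕ} (I : Set ℝ) (A : ℝ → Matrix (Fin n) (Fin n) ℂ) (t0 : ℝ)
    (X : ℝ → Matrix (Fin n) (Fin n) ℂ) : Prop :=
  t0 ∈ I ∧ X t0 = 1 ∧ (∀ t ∈ I, IsUnit (X t)) ∧
  ∃ X', MatLocAC I X X' ∧ ∀ᵐ t ∂volume, t ∈ I → X' t = A t * X t

/-- The supply set whose supremum is the available storage `V_a(t0, x0)`. -/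
def supplySet {n m : ℕ} (I : Set ℝ)
    (A : ℝ → Matrix (Fin n) (Fin n) ℂ) (B : ℝ → Matrix (Fin n) (Fin m) ℂ)
    (C : ℝ → Matrix (Fin m) (Fin n) ℂ) (D : ℝ → Matrix (Fin m) (Fin m) ℂ)
    (t0 : ℝ) (x0 : Fin n → ℂ) : Set ℝ :=
  { c | ∃ t1 x u y, t1 ∈ I ∧ t0 ≤ t1 ∧ IsSIOSol I A B C D x u y ∧ x t0 = x0 ∧
      c = -(supply u y t0 t1) }

/-- Null space decomposition structure: `M i j = 0` whenever `i` or `j` (0-based) is `≥ r`,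
and the top-left `r × r` block of `M` is Hermitian positive definite. -/
def NSDStruct {k : ℕ} (M : Matrix (Fin k) (Fin k) ℂ) (r : ℕ) : Prop :=
  (∀ i j : Fin k, (r ≤ (i : ℕ) ∨ r ≤ (j : ℕ)) → M i j = 0) ∧
  ∀ h : r ≤ k, (M.submatrix (Fin.castLE h) (Fin.castLE h)).PosDef

/-- for a passive LTV system with storage function `V`, the supply set is
nonempty, contains `0`, and is bounded above by `V(t0, x0)`; hence the available storage
satisfies `0 ≤ V_a(t0, x0) ≤ V(t0, x0)`. -/
theorem statement9 {n m : ℕ} (I : Set ℝ) (hIopen : IsOpen I) (hIconn : I.OrdConnected)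
    (A : ℝ → Matrix (Fin n) (Fin n) ℂ) (B : ℝ → Matrix (Fin n) (Fin m) ℂ)
    (C : ℝ → Matrix (Fin m) (Fin n) ℂ) (D : ℝ → Matrix (Fin m) (Fin m) ℂ)
    (hLTV : IsLTV I A B C D)
    (hexist : ∀ t0 ∈ I, ∀ x0 : Fin n → ℂ, ∀ u : ℝ → Fin m → ℂ, VecMemLocLp 2 I u →
        ∃ x y, IsSIOSol I A B C D x u y ∧ x t0 = x0)
    (V : ℝ → (Fin n → ℂ) → ℝ) (hV : IsStorage I A B C D V) :
    ∀ t0 ∈ I, ∀ x0 : Fin n → ℂ,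
      (supplySet I A B C D t0 x0).Nonempty ∧
      (0 : ℝ) ∈ supplySet I A B C D t0 x0 ∧
      (∀ c ∈ supplySet I A B C D t0 x0, c ≤ V t0 x0) ∧
      0 ≤ sSup (supplySet I A B C D t0 x0) ∧
      sSup (supplySet I A B C D t0 x0) ≤ V t0 x0 := by

  intro t0 ht0 x0
  obtain ⟨x, y, hsol, hx0⟩ := hexist t0 ht0 x0 (fun _ => 0)
    (fun a b _ _ i => by simpa using (MeasureTheory.zero_memLp
      (p := 2) (μ := volume.restrict (Icc a b)) (α := ℝ) (E := ℂ)))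
  have hmem0 : (0 : ℝ) ∈ supplySet I A B C D t0 x0 := by
    refine ⟨t0, x, fun _ => 0, y, ht0, le_refl t0, hsol, hx0, ?_⟩
    simp [supply]
  have hub : ∀ c ∈ supplySet I A B C D t0 x0, c ≤ V t0 x0 := by
    rintro c ⟨t1, x', u, y', ht1, ht01, hsol', hx0', rfl⟩
    have h := hV.2.2 x' u y' hsol' t0 t1 ht0 ht1 ht01
    have hpos := hV.1 t1 ht1 (x' t1)
    rw [hx0'] at h
    linarith
  have hbdd : BddAbove (supplySet I A B C D t0 x0) := ⟨V t0 x0, hub⟩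
  refine ⟨⟨0, hmem0⟩, hmem0, hub, le_csSup hbdd hmem0, csSup_le ⟨0, hmem0⟩ hub⟩


end Paper
end

section
/- Consider an LTV system on an open interval I ⊆ ℝ with coefficients A, B, C, D, and assume that for every t0 ∈ I, x0 ∈ ℂ^n, and u ∈ L²_loc(I, ℂ^m) there exists exactly one locally absolutely continuous x : I → ℂ^n with x(t0) = x0 and ẋ(t) = A(t)x(t) + B(t)u(t) for a.e. t ∈ I. Suppose the available storage V_a(t0,x0) := sup { −∫_{t0}^{t1} Re(y(t)* u(t)) dt : t1 ∈ I, t1 ≥ t0, (x,u,y) a state-input-output solution with x(t0) = x0 } is finite for every t0 ∈ I and x0 ∈ ℂ^n. Then there exists Q : I → ℂ^{n×n}, pointwise Hermitian positive semidefinite, such that V_a(t0, x0) = ½ x0* Q(t0) x0 for all t0 ∈ I and x0 ∈ ℂ^n. -/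
open MeasureTheory Matrix Set Filter Topology
open scoped ComplexOrder ENNReal

set_option linter.unusedSectionVars false
namespace Paper

/-- Additive + bounded near 0 implies linear (Cauchy functional equation). -/
lemma additive_bounded_linear (g : ℝ → ℝ) (hadd : ∀ a b, g (a + b) = g a + g b)
    (Cst : ℝ) (hb : ∀ r : ℝ, |r| ≤ 1 → |g r| ≤ Cst) : ∀ r, g r = r * g 1 := by
  intro r
  set f : ℝ →+ ℝ := AddMonoidHom.mk' g hadd with hf
  have hz : ∀ (k : ℤ) (x : ℝ), g (k * x) = k * g x := by
    intro k x
    have := map_zsmul f k x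
    simpa [hf, AddMonoidHom.mk'_apply, zsmul_eq_mul] using this
  have key : ∀ n : ℕ, 0 < n → |g r - r * g 1| ≤ (Cst + |g 1|) / n := by
    intro n hn
    have hn' : (0:ℝ) < n := by exact_mod_cast hn
    set k : ℤ := ⌊(n : ℝ) * r⌋ with hk
    have h1 : |(n:ℝ) * r - k| ≤ 1 := by
      have h2 := Int.floor_le ((n:ℝ) * r)
      have h3 := Int.lt_floor_add_one ((n:ℝ) * r)
      rw [abs_le]; constructor <;> nlinarith
    have hgn : g ((n:ℝ) * r) = n * g r := by
      have := hz (n : ℤ) r; simpa using this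
    have hsplit : g ((n:ℝ) * r) = (k : ℝ) * g 1 + g ((n:ℝ) * r - k) := by
      have := hadd ((k : ℝ) * 1) ((n:ℝ) * r - k)
      have hk1 : g ((k:ℝ) * 1) = (k:ℝ) * g 1 := hz k 1
      calc g ((n:ℝ) * r) = g ((k:ℝ) * 1 + ((n:ℝ) * r - k)) := by ring_nf
        _ = g ((k:ℝ)*1) + g ((n:ℝ)*r - k) := this
        _ = (k : ℝ) * g 1 + g ((n:ℝ) * r - k) := by rw [hk1]
    have hb1 : |g ((n:ℝ) * r - k)| ≤ Cst := hb _ h1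
    have : |(n:ℝ) * g r - (n:ℝ) * r * g 1| ≤ Cst + |g 1| := by
      rw [← hgn]
      calc |g ((n:ℝ)*r) - (n:ℝ)*r*g 1|
          = |g ((n:ℝ)*r - k) + ((k:ℝ) - (n:ℝ)*r) * g 1| := by rw [hsplit]; ring_nf
        _ ≤ |g ((n:ℝ)*r - k)| + |((k:ℝ) - (n:ℝ)*r) * g 1| := abs_add_le _ _
        _ ≤ Cst + |g 1| := by
            refine add_le_add hb1 ?_
            rw [abs_mul]
            have : |(k:ℝ) - (n:ℝ)*r| ≤ 1 := by rwa [abs_sub_comm] at h1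
            calc |(k:ℝ) - (n:ℝ)*r| * |g 1| ≤ 1 * |g 1| :=
                  mul_le_mul_of_nonneg_right this (abs_nonneg _)
              _ = |g 1| := one_mul _
    have : (n:ℝ) * |g r - r * g 1| ≤ Cst + |g 1| := by
      rw [← abs_of_pos hn', ← abs_mul]
      calc |(n:ℝ) * (g r - r * g 1)| = |(n:ℝ) * g r - (n:ℝ) * r * g 1| := by ring_nf
        _ ≤ Cst + |g 1| := this
    rw [le_div_iff₀ hn']
    nlinarith [this]
  by_contra hne
  have hd : 0 < |g r - r * g 1| := abs_pos.mpr (sub_ne_zero.mpr hne)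
  have hC0 : 0 ≤ Cst := by
    have h0 := hb 0 (by simp)
    have hg0 : g 0 = 0 := by have := hadd 0 0; simp at this; linarith
    simpa [hg0] using h0
  have hCg : 0 ≤ Cst + |g 1| := by positivity
  obtain ⟨n, hn⟩ := exists_nat_gt ((Cst + |g 1|) / |g r - r * g 1|)
  have hn0 : 0 < n := by
    rcases Nat.eq_zero_or_pos n with h | h
    · exfalso
      rw [h] at hn
      have : 0 ≤ (Cst + |g 1|) / |g r - r * g 1| := div_nonneg hCg hd.le
      simp at hn
      linarith
    · exact h
  have hn' : (0:ℝ) < n := by exact_mod_cast hn0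
  rw [div_lt_iff₀ hd] at hn
  have h2 : (Cst + |g 1|) / n < |g r - r * g 1| := by
    rw [div_lt_iff₀ hn']
    nlinarith
  linarith [key n hn0]


section Quadratic

variable {k : ℕ} (W : (Fin k → ℂ) → ℝ)

/-- Polar form. -/
noncomputable def polp (x y : Fin k → ℂ) : ℝ := (W (x + y) - W (x - y)) / 4

variable (hnn : ∀ x, 0 ≤ W x)
  (hsm : ∀ (c : ℂ) (x), W (c • x) = ‖c‖ ^ 2 * W x)
  (hpar : ∀ x y, W (x + y) + W (x - y) = 2 * W x + 2 * W y)

section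
include hsm

lemma W_zero : W 0 = 0 := by
  have := hsm 0 0
  simpa using this

lemma W_neg (x : Fin k → ℂ) : W (-x) = W x := by
  have := hsm (-1) x
  simpa using this

lemma polp_symm (x y : Fin k → ℂ) : polp W x y = polp W y x := by
  unfold polp
  have h1 : x - y = -(y - x) := by abel
  rw [h1, W_neg W hsm, add_comm x y]

lemma polp_self (x : Fin k → ℂ) : polp W x x = W x := by
  unfold polp
  have h1 : x + x = (2 : ℂ) • x := by module
  have h2 : x - x = (0:Fin k → ℂ) := by abel
  rw [h1, h2, hsm, W_zero W hsm]
  norm_num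

lemma polp_neg_right (x y : Fin k → ℂ) : polp W x (-y) = - polp W x y := by
  unfold polp
  have h1 : x + -y = x - y := by abel
  have h2 : x - -y = x + y := by abel
  rw [h1, h2]; ring

lemma polp_zero_right (x : Fin k → ℂ) : polp W x 0 = 0 := by
  unfold polp
  simp

lemma polp_smul_diag (c : ℂ) (x y : Fin k → ℂ) :
    polp W (c • x) (c • y) = ‖c‖ ^ 2 * polp W x y := by
  unfold polp
  rw [← smul_add, ← smul_sub, hsm, hsm]
  ring

end

section
include hsm hpar

lemma polp_add_left (x y z : Fin k → ℂ) :
    polp W (x + y) z = polp W x z + polp W y z := by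
  have key : ∀ a b : Fin k → ℂ, polp W a z + polp W b z
      = 2 * polp W ((2⁻¹ : ℂ) • (a + b)) z := by
    intro a b
    have e1 : ((2⁻¹:ℂ) • (a + b) + z) + ((2⁻¹:ℂ) • (a - b)) = a + z := by module
    have e2 : ((2⁻¹:ℂ) • (a + b) + z) - ((2⁻¹:ℂ) • (a - b)) = b + z := by module
    have e3 : ((2⁻¹:ℂ) • (a + b) - z) + ((2⁻¹:ℂ) • (a - b)) = a - z := by module
    have e4 : ((2⁻¹:ℂ) • (a + b) - z) - ((2⁻¹:ℂ) • (a - b)) = b - z := by module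
    have h1 := hpar ((2⁻¹:ℂ) • (a + b) + z) ((2⁻¹:ℂ) • (a - b))
    have h2 := hpar ((2⁻¹:ℂ) • (a + b) - z) ((2⁻¹:ℂ) • (a - b))
    rw [e1, e2] at h1
    rw [e3, e4] at h2
    unfold polp
    linarith
  have half : ∀ a : Fin k → ℂ, polp W ((2⁻¹:ℂ) • a) z = polp W a z / 2 := by
    intro a
    have h0 := key a 0
    have hz0 : polp W 0 z = 0 := by
      unfold polp
      rw [zero_add, zero_sub, W_neg W hsm]
      ring
    have e : (2⁻¹:ℂ) • (a + 0) = (2⁻¹:ℂ) • a := by module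
    rw [e, hz0] at h0
    linarith
  have h := key x y
  rw [half (x + y)] at h
  linarith

lemma polp_add_right (x y z : Fin k → ℂ) :
    polp W x (y + z) = polp W x y + polp W x z := by
  rw [polp_symm W hsm, polp_add_left W hsm hpar, polp_symm W hsm y x, polp_symm W hsm z x]

include hnn

lemma polp_bound (x y : Fin k → ℂ) : |polp W x y| ≤ (W x + W y) / 2 := by
  have h := hpar x y
  have h1 := hnn (x + y)
  have h2 := hnn (x - y)
  unfold polp
  rw [abs_le]
  constructor <;> [skip; skip] <;> nlinarith

lemma polp_smul_real (r : ℝ) (x y : Fin k → ℂ) :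
    polp W x ((r : ℂ) • y) = r * polp W x y := by
  set g : ℝ → ℝ := fun s => polp W x ((s : ℂ) • y) with hg
  have hadd : ∀ a b : ℝ, g (a + b) = g a + g b := by
    intro a b
    show polp W x (((a + b : ℝ) : ℂ) • y) = _
    have e : (((a + b : ℝ) : ℂ)) • y = ((a:ℝ):ℂ) • y + ((b:ℝ):ℂ) • y := by
      push_cast
      rw [← add_smul]
    rw [e, polp_add_right W hsm hpar]
  have hb : ∀ s : ℝ, |s| ≤ 1 → |g s| ≤ (W x + W y) / 2 := by
    intro s hs
    have h1 : |g s| ≤ (W x + W ((s:ℂ) • y)) / 2 := polp_bound W hnn hsm hpar x _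
    have h2 : W ((s:ℂ) • y) = s ^ 2 * W y := by
      rw [hsm]
      norm_num
    have h3 : s ^ 2 ≤ 1 := by nlinarith [abs_nonneg s, sq_abs s]
    have := hnn y
    rw [h2] at h1
    nlinarith
  have := additive_bounded_linear g hadd _ hb r
  rw [hg] at this
  simp only at this
  rw [this]
  have : ((1:ℝ):ℂ) • y = y := by norm_num
  rw [this]

end

end Quadratic

section Hermitian

variable {k : ℕ} (W : (Fin k → ℂ) → ℝ)

/-- Hermitian sesquilinear form by polarization (conjugate-linear in the first slot). -/
noncomputable def polh (x y : Fin k → ℂ) : ℂ :=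
  (polp W x y : ℂ) - Complex.I * (polp W x (Complex.I • y) : ℂ)

variable (hnn : ∀ x, 0 ≤ W x)
  (hsm : ∀ (c : ℂ) (x), W (c • x) = ‖c‖ ^ 2 * W x)
  (hpar : ∀ x y, W (x + y) + W (x - y) = 2 * W x + 2 * W y)

include hnn hsm hpar

lemma polp_I_I (x y : Fin k → ℂ) :
    polp W (Complex.I • x) (Complex.I • y) = polp W x y := by
  rw [polp_smul_diag W hsm]
  simp

lemma polp_I_left (x y : Fin k → ℂ) :
    polp W (Complex.I • x) y = - polp W x (Complex.I • y) := by
  have e : y = Complex.I • ((-Complex.I) • y) := by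
    rw [smul_smul]
    simp
  calc polp W (Complex.I • x) y
      = polp W (Complex.I • x) (Complex.I • ((-Complex.I) • y)) := by rw [← e]
    _ = polp W x ((-Complex.I) • y) := polp_I_I W hnn hsm hpar x _
    _ = polp W x (-(Complex.I • y)) := by rw [← neg_smul]
    _ = - polp W x (Complex.I • y) := polp_neg_right W hsm x _

lemma polp_I_self (x : Fin k → ℂ) : polp W x (Complex.I • x) = 0 := by
  have h1 : polp W (Complex.I • x) x = - polp W x (Complex.I • x) :=
    polp_I_left W hnn hsm hpar x x
  have h2 : polp W (Complex.I • x) x = polp W x (Complex.I • x) := polp_symm W hsm _ _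
  linarith [h1 ▸ h2, h2]

lemma polh_self (x : Fin k → ℂ) : polh W x x = (W x : ℂ) := by
  unfold polh
  rw [polp_I_self W hnn hsm hpar, polp_self W hsm]
  simp

lemma polh_add_right (x y z : Fin k → ℂ) :
    polh W x (y + z) = polh W x y + polh W x z := by
  unfold polh
  rw [smul_add, polp_add_right W hsm hpar, polp_add_right W hsm hpar]
  push_cast
  ring

lemma polh_smul_right (c : ℂ) (x y : Fin k → ℂ) :
    polh W x (c • y) = c * polh W x y := by
  have hI : ∀ v : Fin k → ℂ, polh W x (Complex.I • v) = Complex.I * polh W x v := by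
    intro v
    unfold polh
    have e : Complex.I • (Complex.I • v) = -v := by
      rw [smul_smul, Complex.I_mul_I, neg_one_smul]
    rw [e, polp_neg_right W hsm]
    push_cast
    ring_nf
    rw [Complex.I_sq]
    ring
  have hR : ∀ (r : ℝ) (v : Fin k → ℂ), polh W x ((r:ℂ) • v) = (r:ℂ) * polh W x v := by
    intro r v
    unfold polh
    rw [polp_smul_real W hnn hsm hpar, smul_comm, polp_smul_real W hnn hsm hpar]
    push_cast
    ring
  have hdec : c • y = (c.re : ℂ) • y + (c.im : ℂ) • (Complex.I • y) := by
    rw [smul_smul, ← add_smul]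
    congr 1
    rw [mul_comm]
    rw [mul_comm] at *
    exact (Complex.re_add_im c).symm
  rw [hdec, polh_add_right W hnn hsm hpar, hR, hR, hI]
  have h := Complex.re_add_im c
  linear_combination (polh W x y) * h

lemma polh_conj_symm (x y : Fin k → ℂ) :
    polh W y x = (starRingEnd ℂ) (polh W x y) := by
  unfold polh
  rw [map_sub, _root_.map_mul]
  rw [Complex.conj_I, Complex.conj_ofReal, Complex.conj_ofReal]
  rw [polp_symm W hsm y x]
  have h1 : polp W y (Complex.I • x) = - polp W x (Complex.I • y) := by
    rw [polp_symm W hsm y (Complex.I • x)]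
    exact polp_I_left W hnn hsm hpar x y
  rw [h1]
  push_cast
  ring

lemma exists_psd_matrix :
    ∃ Q : Matrix (Fin k) (Fin k) ℂ, Q.PosSemidef ∧
      ∀ x : Fin k → ℂ, star x ⬝ᵥ (Q *ᵥ x) = ((2 * W x : ℝ) : ℂ) := by
  classical
  set e : Fin k → (Fin k → ℂ) := fun i => Pi.single i 1 with he
  set φ : (Fin k → ℂ) → (Fin k → ℂ) →ₗ[ℂ] ℂ := fun x =>
    { toFun := polh W x, map_add' := polh_add_right W hnn hsm hpar x,
      map_smul' := fun c v => polh_smul_right W hnn hsm hpar c x v } with hφ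
  have hsum : ∀ x : Fin k → ℂ, (∑ j, x j • e j) = x := by
    intro x
    funext i
    rw [Finset.sum_apply]
    simp only [he, Pi.smul_apply, Pi.single_apply, smul_eq_mul]
    simp [eq_comm]
  have expand2 : ∀ x v : Fin k → ℂ, polh W v x = ∑ j, x j * polh W v (e j) := by
    intro x v
    conv_lhs => rw [show polh W v x = (φ v) x from rfl, ← hsum x]
    rw [map_sum]
    simp [hφ]
  refine ⟨Matrix.of fun i j => 2 * polh W (e i) (e j),
    Matrix.posSemidef_iff_dotProduct_mulVec.mpr ⟨?_, ?_⟩, ?_⟩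
  · -- Hermitian
    ext i j
    simp only [Matrix.conjTranspose_apply, Matrix.of_apply]
    have hcs := polh_conj_symm W hnn hsm hpar (e j) (e i)
    rw [hcs]
    simp [star_mul', RCLike.star_def]
  · -- positivity
    intro x
    have key : star x ⬝ᵥ ((Matrix.of fun i j => 2 * polh W (e i) (e j)) *ᵥ x)
        = ((2 * W x : ℝ) : ℂ) := by
      have hmv : ∀ i, ((Matrix.of fun i j => 2 * polh W (e i) (e j)) *ᵥ x) i
          = 2 * polh W (e i) x := by
        intro i
        rw [expand2 x (e i)]
        simp only [Matrix.mulVec, dotProduct, Matrix.of_apply]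
        rw [Finset.mul_sum]
        congr 1
        funext j
        ring
      have : star x ⬝ᵥ ((Matrix.of fun i j => 2 * polh W (e i) (e j)) *ᵥ x)
          = ∑ i, (starRingEnd ℂ) (x i) * (2 * polh W (e i) x) := by
        simp only [dotProduct, Pi.star_apply, RCLike.star_def]
        exact Finset.sum_congr rfl fun i _ => by rw [hmv i]
      rw [this]
      have h2 : ∀ i, (starRingEnd ℂ) (x i) * (2 * polh W (e i) x)
          = 2 * (starRingEnd ℂ) (x i * polh W x (e i)) := by
        intro i
        rw [polh_conj_symm W hnn hsm hpar]
        rw [_root_.map_mul]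
        ring
      rw [Finset.sum_congr rfl fun i _ => h2 i, ← Finset.mul_sum, ← map_sum]
      rw [← expand2 x x, polh_self W hnn hsm hpar, Complex.conj_ofReal]
      push_cast
      ring
    rw [key]
    rw [Complex.zero_le_real]
    have := hnn x
    linarith
  · -- value
    intro x
    have hmv : ∀ i, ((Matrix.of fun i j => 2 * polh W (e i) (e j)) *ᵥ x) i
        = 2 * polh W (e i) x := by
      intro i
      rw [expand2 x (e i)]
      simp only [Matrix.mulVec, dotProduct, Matrix.of_apply]
      rw [Finset.mul_sum]
      congr 1
      funext j
      ring
    have : star x ⬝ᵥ ((Matrix.of fun i j => 2 * polh W (e i) (e j)) *ᵥ x)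
        = ∑ i, (starRingEnd ℂ) (x i) * (2 * polh W (e i) x) := by
      simp only [dotProduct, Pi.star_apply, RCLike.star_def]
      exact Finset.sum_congr rfl fun i _ => by rw [hmv i]
    rw [this]
    have h2 : ∀ i, (starRingEnd ℂ) (x i) * (2 * polh W (e i) x)
        = 2 * (starRingEnd ℂ) (x i * polh W x (e i)) := by
      intro i
      rw [polh_conj_symm W hnn hsm hpar]
      rw [_root_.map_mul]
      ring
    rw [Finset.sum_congr rfl fun i _ => h2 i, ← Finset.mul_sum, ← map_sum]
    rw [← expand2 x x, polh_self W hnn hsm hpar, Complex.conj_ofReal]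
    push_cast
    ring

end Hermitian

section Analytic

set_option linter.unusedSectionVars false

variable {n m : ℕ} {I : Set ℝ}

lemma icc_mem_subset (hI : I.OrdConnected) {a b : ℝ} (ha : a ∈ I) (hb : b ∈ I) :
    Icc a b ⊆ I := hI.out ha hb

lemma min_mem_I {a b : ℝ} (ha : a ∈ I) (hb : b ∈ I) : min a b ∈ I := by
  rcases le_total a b with h | h
  · rwa [min_eq_left h]
  · rwa [min_eq_right h]

lemma max_mem_I {a b : ℝ} (ha : a ∈ I) (hb : b ∈ I) : max a b ∈ I := by
  rcases le_total a b with h | h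
  · rwa [max_eq_right h]
  · rwa [max_eq_left h]

/-- A locally absolutely continuous function is continuous on compact subintervals. -/
lemma vecLocAC_continuousOn (hI : I.OrdConnected) {k : ℕ} {x x' : ℝ → Fin k → ℂ}
    (h : VecLocAC I x x') {a b : ℝ} (ha : a ∈ I) (hb : b ∈ I) (i : Fin k) :
    ContinuousOn (fun t => x t i) (Icc a b) := by
  rcases le_or_gt a b with hab | hab
  · have hint : IntegrableOn (fun t => x' t i) (Set.uIcc a b) := by
      rw [Set.uIcc_of_le hab]; exact h.1 a b ha hb i
    have heq : ∀ t ∈ Icc a b, x a i + ∫ τ in a..t, x' τ i = x t i := by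
      intro t ht
      exact (h.2 a t ha (icc_mem_subset hI ha hb ht) i).symm
    have hcont : ContinuousOn (fun t => x a i + ∫ τ in a..t, x' τ i) (Set.uIcc a b) :=
      continuousOn_const.add (intervalIntegral.continuousOn_primitive_interval hint)
    rw [Set.uIcc_of_le hab] at hcont
    exact ContinuousOn.congr hcont fun t ht => (heq t ht).symm
  · rw [Icc_eq_empty (not_le.mpr hab)]; exact continuousOn_empty _

lemma vecLocAC_memTop (hI : I.OrdConnected) {k : ℕ} {x x' : ℝ → Fin k → ℂ}
    (h : VecLocAC I x x') {a b : ℝ} (ha : a ∈ I) (hb : b ∈ I) (i : Fin k) :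
    MemLp (fun t => x t i) ⊤ (volume.restrict (Icc a b)) := by
  have hc := vecLocAC_continuousOn hI h ha hb i
  obtain ⟨M, hM⟩ := isCompact_Icc.exists_bound_of_continuousOn hc
  refine memLp_top_of_bound (hc.aestronglyMeasurable measurableSet_Icc) M ?_
  filter_upwards [ae_restrict_mem measurableSet_Icc] with t ht using hM t ht

/-- `C x + D u` is locally `L²`. -/
lemma memLp2_output (hI : I.OrdConnected)
    {C : ℝ → Matrix (Fin m) (Fin n) ℂ} {D : ℝ → Matrix (Fin m) (Fin m) ℂ}
    (hC : MemLocLp 2 I C) (hD : MemLocLp ⊤ I D)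
    {x x' : ℝ → Fin n → ℂ} (hx : VecLocAC I x x')
    {u : ℝ → Fin m → ℂ} (hu : VecMemLocLp 2 I u) :
    VecMemLocLp 2 I (fun t => C t *ᵥ x t + D t *ᵥ u t) := by
  intro a b ha hb i
  have hrw : (fun t => (C t *ᵥ x t + D t *ᵥ u t) i)
      = fun t => (∑ j, C t i j * x t j) + (∑ j, D t i j * u t j) := by
    funext t
    simp [Matrix.mulVec, dotProduct]
  rw [hrw]
  apply MemLp.add
  · apply memLp_finset_sum
    intro j _
    have h1 : MemLp (fun t => C t i j) 2 (volume.restrict (Icc a b)) := hC a b ha hb i j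
    have h2 := vecLocAC_memTop hI hx ha hb j
    have h3 : MemLp ((fun t => C t i j) • (fun t => x t j)) 2 (volume.restrict (Icc a b)) :=
      MemLp.smul (p := 2) (q := ⊤) (r := 2) h2 h1
    have h4 : ((fun t => C t i j) • (fun t => x t j)) = fun t => C t i j * x t j := rfl
    rwa [h4] at h3
  · apply memLp_finset_sum
    intro j _
    have h1 : MemLp (fun t => D t i j) ⊤ (volume.restrict (Icc a b)) := hD a b ha hb i j
    have h2 : MemLp (fun t => u t j) 2 (volume.restrict (Icc a b)) := hu a b ha hb j
    have h3 : MemLp ((fun t => D t i j) • (fun t => u t j)) 2 (volume.restrict (Icc a b)) :=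
      MemLp.smul (p := ⊤) (q := 2) (r := 2) h2 h1
    have h4 : ((fun t => D t i j) • (fun t => u t j)) = fun t => D t i j * u t j := rfl
    rwa [h4] at h3

lemma conj_memLp2 {k : ℕ} {f : ℝ → Fin k → ℂ} {i : Fin k} {μ : MeasureTheory.Measure ℝ}
    (hf : MemLp (fun t => f t i) 2 μ) :
    MemLp (fun t => (starRingEnd ℂ) (f t i)) 2 μ := by
  refine MemLp.of_le_mul (c := 1) hf ?_ ?_
  · exact Complex.continuous_conj.comp_aestronglyMeasurable hf.1
  · filter_upwards with t
    rw [RCLike.norm_conj, one_mul]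

/-- The supply integrand is locally integrable. -/
lemma supply_integrand_integrableOn {u y : ℝ → Fin m → ℂ}
    (hu : VecMemLocLp 2 I u) (hy : VecMemLocLp 2 I y) {a b : ℝ} (ha : a ∈ I) (hb : b ∈ I) :
    IntegrableOn (fun t => (star (y t) ⬝ᵥ u t).re) (Icc a b) := by
  have hrw : (fun t => (star (y t) ⬝ᵥ u t).re)
      = fun t => ∑ j, ((starRingEnd ℂ) (y t j) * u t j).re := by
    funext t
    rw [dotProduct, Complex.re_sum]
    rfl
  rw [hrw]
  apply MeasureTheory.integrable_finset_sum
  intro j _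
  have h1 : MemLp (fun t => (starRingEnd ℂ) (y t j)) 2 (volume.restrict (Icc a b)) :=
    conj_memLp2 (hy a b ha hb j)
  have h2 : MemLp (fun t => u t j) 2 (volume.restrict (Icc a b)) := hu a b ha hb j
  have hmul : MemLp (fun t => (starRingEnd ℂ) (y t j) * u t j) 1
      (volume.restrict (Icc a b)) := by
    have hexp : (1:ℝ≥0∞)/1 = 1/2 + 1/2 := by
      rw [ENNReal.div_add_div_same]
      norm_num
      rw [ENNReal.div_self (by norm_num) (by norm_num)]
    haveI : ENNReal.HolderTriple 2 2 1 := ⟨by rw [inv_one]; exact ENNReal.inv_two_add_inv_two⟩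
    have h5 := MemLp.smul (p := 2) (q := 2) (r := 1) h2 h1
    have h6 : ((fun t => (starRingEnd ℂ) (y t j)) • (fun t => u t j))
        = fun t => (starRingEnd ℂ) (y t j) * u t j := rfl
    rwa [h6] at h5
  exact (memLp_one_iff_integrable.mp hmul).re

lemma supply_intervalIntegrable {u y : ℝ → Fin m → ℂ}
    (hu : VecMemLocLp 2 I u) (hy : VecMemLocLp 2 I y) {c d : ℝ} (hc : c ∈ I) (hd : d ∈ I) :
    IntervalIntegrable (fun t => (star (y t) ⬝ᵥ u t).re) volume c d := by
  apply MeasureTheory.IntegrableOn.intervalIntegrable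
  rw [Set.uIcc]
  exact supply_integrand_integrableOn hu hy (min_mem_I hc hd) (max_mem_I hc hd)

lemma vecLocAC_intervalIntegrable {k : ℕ} {x x' : ℝ → Fin k → ℂ}
    (h : VecLocAC I x x') {c d : ℝ} (hc : c ∈ I) (hd : d ∈ I) (i : Fin k) :
    IntervalIntegrable (fun t => x' t i) volume c d := by
  apply MeasureTheory.IntegrableOn.intervalIntegrable
  rw [Set.uIcc]
  exact h.1 _ _ (min_mem_I hc hd) (max_mem_I hc hd) i

end Analytic


section Sols

set_option linter.unusedSectionVars false

variable {n m : ℕ} {I : Set ℝ}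
variable {A : ℝ → Matrix (Fin n) (Fin n) ℂ} {B : ℝ → Matrix (Fin n) (Fin m) ℂ}
variable {C : ℝ → Matrix (Fin m) (Fin n) ℂ} {D : ℝ → Matrix (Fin m) (Fin m) ℂ}

lemma vecMemLocLp_combo {k : ℕ} (α β : ℂ) {f g : ℝ → Fin k → ℂ}
    (hf : VecMemLocLp 2 I f) (hg : VecMemLocLp 2 I g) :
    VecMemLocLp 2 I (fun t => α • f t + β • g t) := by
  intro a b ha hb i
  have : (fun t => (α • f t + β • g t) i) = fun t => α * f t i + β * g t i := by
    funext t; simp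
  rw [this]
  exact ((hf a b ha hb i).const_mul α).add ((hg a b ha hb i).const_mul β)

lemma IsSIOSol.combo (α β : ℂ) {x u y x2 u2 y2}
    (h1 : IsSIOSol I A B C D x u y) (h2 : IsSIOSol I A B C D x2 u2 y2) :
    IsSIOSol I A B C D (fun t => α • x t + β • x2 t) (fun t => α • u t + β • u2 t)
      (fun t => α • y t + β • y2 t) := by
  obtain ⟨hu1, hy1, ⟨x', hAC1, hODE1⟩, hout1⟩ := h1
  obtain ⟨hu2, hy2, ⟨x2', hAC2, hODE2⟩, hout2⟩ := h2
  refine ⟨vecMemLocLp_combo α β hu1 hu2, vecMemLocLp_combo α β hy1 hy2,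
    ⟨fun t => α • x' t + β • x2' t, ⟨?_, ?_⟩, ?_⟩, ?_⟩
  · intro a b ha hb i
    have : (fun t => (α • x' t + β • x2' t) i) = fun t => α * x' t i + β * x2' t i := by
      funext t; simp
    rw [this]
    exact ((hAC1.1 a b ha hb i).const_mul α).add ((hAC2.1 a b ha hb i).const_mul β)
  · intro s t hs ht i
    have e1 := hAC1.2 s t hs ht i
    have e2 := hAC2.2 s t hs ht i
    have i1 : IntervalIntegrable (fun τ => x' τ i) volume s t :=
      vecLocAC_intervalIntegrable hAC1 hs ht i
    have i2 : IntervalIntegrable (fun τ => x2' τ i) volume s t :=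
      vecLocAC_intervalIntegrable hAC2 hs ht i
    have : (∫ τ in s..t, (α • x' τ + β • x2' τ) i)
        = α * (∫ τ in s..t, x' τ i) + β * (∫ τ in s..t, x2' τ i) := by
      have hfun : (fun τ => (α • x' τ + β • x2' τ) i)
          = fun τ => α * x' τ i + β * x2' τ i := by funext τ; simp
      rw [hfun, intervalIntegral.integral_add (i1.const_mul α) (i2.const_mul β),
        intervalIntegral.integral_const_mul, intervalIntegral.integral_const_mul]
    rw [this]
    simp only [Pi.add_apply, Pi.smul_apply, smul_eq_mul]
    rw [e1, e2]
    ring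
  · filter_upwards [hODE1, hODE2] with t h1t h2t
    intro htI
    rw [h1t htI, h2t htI]
    rw [Matrix.mulVec_add, Matrix.mulVec_add, Matrix.mulVec_smul, Matrix.mulVec_smul,
      Matrix.mulVec_smul, Matrix.mulVec_smul, smul_add, smul_add]
    abel
  · filter_upwards [hout1, hout2] with t h1t h2t
    intro htI
    rw [h1t htI, h2t htI]
    rw [Matrix.mulVec_add, Matrix.mulVec_add, Matrix.mulVec_smul, Matrix.mulVec_smul,
      Matrix.mulVec_smul, Matrix.mulVec_smul, smul_add, smul_add]
    abel

lemma supply_smul (c : ℂ) (u y : ℝ → Fin m → ℂ) (t0 t1 : ℝ) :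
    supply (fun t => c • u t) (fun t => c • y t) t0 t1 = ‖c‖ ^ 2 * supply u y t0 t1 := by
  unfold supply
  rw [← intervalIntegral.integral_const_mul]
  congr 1
  funext t
  have : star (c • y t) ⬝ᵥ (c • u t) = ((‖c‖^2 : ℝ) : ℂ) * (star (y t) ⬝ᵥ u t) := by
    rw [star_smul, smul_dotProduct, dotProduct_smul]
    rw [smul_smul, smul_eq_mul]
    congr 1
    rw [RCLike.star_def, Complex.conj_mul']
    norm_cast
  rw [this, Complex.re_ofReal_mul]

lemma supply_congr {u y u' y' : ℝ → Fin m → ℂ} (hu : ∀ t, u t = u' t) (hy : ∀ t, y t = y' t)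
    (t0 t1 : ℝ) : supply u y t0 t1 = supply u' y' t0 t1 := by
  unfold supply
  congr 1
  funext t
  rw [hu t, hy t]

lemma supply_parallelogram {u1 y1 u2 y2 : ℝ → Fin m → ℂ}
    (hu1 : VecMemLocLp 2 I u1) (hy1 : VecMemLocLp 2 I y1)
    (hu2 : VecMemLocLp 2 I u2) (hy2 : VecMemLocLp 2 I y2)
    {t0 s : ℝ} (ht0 : t0 ∈ I) (hs : s ∈ I) :
    supply (fun t => (2⁻¹:ℂ) • u1 t + (2⁻¹:ℂ) • u2 t)
        (fun t => (2⁻¹:ℂ) • y1 t + (2⁻¹:ℂ) • y2 t) t0 s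
      + supply (fun t => (2⁻¹:ℂ) • u1 t + (-2⁻¹:ℂ) • u2 t)
        (fun t => (2⁻¹:ℂ) • y1 t + (-2⁻¹:ℂ) • y2 t) t0 s
    = 2⁻¹ * supply u1 y1 t0 s + 2⁻¹ * supply u2 y2 t0 s := by
  unfold supply
  have hP := supply_intervalIntegrable (vecMemLocLp_combo (2⁻¹:ℂ) (2⁻¹:ℂ) hu1 hu2)
    (vecMemLocLp_combo (2⁻¹:ℂ) (2⁻¹:ℂ) hy1 hy2) ht0 hs
  have hM := supply_intervalIntegrable (vecMemLocLp_combo (2⁻¹:ℂ) (-2⁻¹:ℂ) hu1 hu2)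
    (vecMemLocLp_combo (2⁻¹:ℂ) (-2⁻¹:ℂ) hy1 hy2) ht0 hs
  have h1 := supply_intervalIntegrable hu1 hy1 ht0 hs
  have h2 := supply_intervalIntegrable hu2 hy2 ht0 hs
  rw [← intervalIntegral.integral_add hP hM, ← intervalIntegral.integral_const_mul,
    ← intervalIntegral.integral_const_mul,
    ← intervalIntegral.integral_add (h1.const_mul _) (h2.const_mul _)]
  congr 1
  funext t
  have hc : (star ((2⁻¹:ℂ) • y1 t + (2⁻¹:ℂ) • y2 t) ⬝ᵥ ((2⁻¹:ℂ) • u1 t + (2⁻¹:ℂ) • u2 t))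
      + (star ((2⁻¹:ℂ) • y1 t + (-2⁻¹:ℂ) • y2 t) ⬝ᵥ ((2⁻¹:ℂ) • u1 t + (-2⁻¹:ℂ) • u2 t))
      = (2⁻¹:ℂ) * (star (y1 t) ⬝ᵥ u1 t) + (2⁻¹:ℂ) * (star (y2 t) ⬝ᵥ u2 t) := by
    simp only [star_add, star_smul, add_dotProduct, dotProduct_add,
      smul_dotProduct, dotProduct_smul, smul_eq_mul, RCLike.star_def,
      map_inv₀, map_neg, Complex.conj_ofNat]
    ring
  have := congrArg Complex.re hc
  rw [Complex.add_re] at this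
  rw [this]
  simp [Complex.add_re, Complex.mul_re]

end Sols


section Ext

set_option linter.unusedSectionVars false

variable {n m : ℕ} {I : Set ℝ}
variable {A : ℝ → Matrix (Fin n) (Fin n) ℂ} {B : ℝ → Matrix (Fin n) (Fin m) ℂ}
variable {C : ℝ → Matrix (Fin m) (Fin n) ℂ} {D : ℝ → Matrix (Fin m) (Fin m) ℂ}

/-- Existence and uniqueness of state trajectories (hypothesis of the theorem). -/
def ExUniq (I : Set ℝ) (A : ℝ → Matrix (Fin n) (Fin n) ℂ)
    (B : ℝ → Matrix (Fin n) (Fin m) ℂ) : Prop :=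
  ∀ t0 ∈ I, ∀ x0 : Fin n → ℂ, ∀ u : ℝ → Fin m → ℂ, VecMemLocLp 2 I u →
    ∃ x x' : ℝ → Fin n → ℂ, VecLocAC I x x' ∧
      (∀ᵐ t ∂volume, t ∈ I → x' t = A t *ᵥ x t + B t *ᵥ u t) ∧ x t0 = x0 ∧
      ∀ z z' : ℝ → Fin n → ℂ, VecLocAC I z z' →
        (∀ᵐ t ∂volume, t ∈ I → z' t = A t *ᵥ z t + B t *ᵥ u t) → z t0 = x0 →
        ∀ t ∈ I, z t = x t

lemma exists_zero_input_sol (hIconn : I.OrdConnected) (hLTV : IsLTV I A B C D)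
    (hex : ExUniq I A B) {t0 : ℝ} (ht0 : t0 ∈ I) (x0 : Fin n → ℂ) :
    ∃ x u y, IsSIOSol I A B C D x u y ∧ x t0 = x0 := by
  have hu0 : VecMemLocLp 2 I (fun _ => (0 : Fin m → ℂ)) := by
    intro a b ha hb i
    simpa using (zero_memLp (p := 2) (μ := volume.restrict (Icc a b)) (E := ℂ))
  obtain ⟨x, x', hAC, hODE, hx0, _⟩ := hex t0 ht0 x0 _ hu0
  refine ⟨x, (fun _ => 0), fun t => C t *ᵥ x t + D t *ᵥ (0 : Fin m → ℂ),
    ⟨hu0, ?_, ⟨x', hAC, hODE⟩, ?_⟩, hx0⟩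
  · exact memLp2_output hIconn hLTV.2.2.1 hLTV.2.2.2 hAC hu0
  · filter_upwards with t _
    rfl

lemma zero_mem_supplySet (hIconn : I.OrdConnected) (hLTV : IsLTV I A B C D)
    (hex : ExUniq I A B) {t0 : ℝ} (ht0 : t0 ∈ I) (x0 : Fin n → ℂ) :
    (0:ℝ) ∈ supplySet I A B C D t0 x0 := by
  obtain ⟨x, u, y, hsol, hx0⟩ := exists_zero_input_sol hIconn hLTV hex ht0 x0
  exact ⟨t0, x, u, y, ht0, le_refl _, hsol, hx0, by simp [supply]⟩

lemma smul_mem_supplySet {c : ℝ} (lam : ℂ) {t0 : ℝ} {x0 : Fin n → ℂ}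
    (hc : c ∈ supplySet I A B C D t0 x0) :
    ‖lam‖^2 * c ∈ supplySet I A B C D t0 (lam • x0) := by
  obtain ⟨t1, x, u, y, ht1, h01, hsol, hx0, rfl⟩ := hc
  have hcombo := hsol.combo lam 0 hsol
  refine ⟨t1, _, _, _, ht1, h01, hcombo, ?_, ?_⟩
  · rw [hx0]
    simp
  · have he : supply (fun t => lam • u t + (0:ℂ) • u t) (fun t => lam • y t + (0:ℂ) • y t) t0 t1
        = supply (fun t => lam • u t) (fun t => lam • y t) t0 t1 := by
      apply supply_congr <;> intro t <;> simp
    rw [he, supply_smul]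
    ring

lemma exists_extension (hIconn : I.OrdConnected) (hLTV : IsLTV I A B C D)
    (hex : ExUniq I A B) {x : ℝ → Fin n → ℂ} {u y : ℝ → Fin m → ℂ}
    (hsol : IsSIOSol I A B C D x u y)
    {t0 t1 s : ℝ} (ht0 : t0 ∈ I) (ht1 : t1 ∈ I) (hs : s ∈ I)
    (h01 : t0 ≤ t1) (h1s : t1 ≤ s) :
    ∃ z v w, IsSIOSol I A B C D z v w ∧ z t0 = x t0 ∧
      supply v w t0 s = supply u y t0 t1 := by
  classical
  obtain ⟨hu, hy, ⟨x', hAC, hODE⟩, hout⟩ := hsol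
  set v : ℝ → Fin m → ℂ := fun t i => if t ≤ t1 then u t i else 0 with hv
  have hvLp : VecMemLocLp 2 I v := by
    intro a b ha hb i
    have hrw : (fun t => v t i) = (Set.indicator (Set.Iic t1) (fun t => u t i)) := by
      funext t
      simp [hv, Set.indicator_apply, Set.mem_Iic]
    rw [hrw]
    exact MemLp.indicator measurableSet_Iic (hu a b ha hb i)
  obtain ⟨w, w', hwAC, hwODE, hw1, _⟩ := hex t1 ht1 (x t1) v hvLp
  set z : ℝ → Fin n → ℂ := fun t => if t ≤ t1 then x t else w t with hz
  set z' : ℝ → Fin n → ℂ := fun t => if t ≤ t1 then x' t else w' t with hz'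
  have hzint : ∀ a b : ℝ, a ∈ I → b ∈ I → ∀ i, IntegrableOn (fun t => z' t i) (Icc a b) := by
    intro a b ha hb i
    have h1 : IntegrableOn (fun t => x' t i) (Icc a b) := hAC.1 a b ha hb i
    have h2 : IntegrableOn (fun t => w' t i) (Icc a b) := hwAC.1 a b ha hb i
    have heq : (fun t => z' t i)
        = (fun t => (Set.Iic t1).indicator (fun t => x' t i) t
            + (Set.Ioi t1).indicator (fun t => w' t i) t) := by
      funext t
      by_cases h : t ≤ t1
      · simp [hz', Set.indicator_apply, Set.mem_Iic, Set.mem_Ioi, h, not_lt.mpr h]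
      · simp [hz', Set.indicator_apply, Set.mem_Iic, Set.mem_Ioi, h, not_le.mp h]
    rw [heq]
    have e1 : IntegrableOn (fun t => x' t i) (Set.Iic t1) (volume.restrict (Icc a b)) :=
      h1.integrableOn
    have e2 : IntegrableOn (fun t => w' t i) (Set.Ioi t1) (volume.restrict (Icc a b)) :=
      h2.integrableOn
    exact (e1.integrable_indicator measurableSet_Iic).add
      (e2.integrable_indicator measurableSet_Ioi)
  have hzi : ∀ c d : ℝ, c ∈ I → d ∈ I → ∀ i,
      IntervalIntegrable (fun t => z' t i) volume c d := by
    intro c d hc hd i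
    apply MeasureTheory.IntegrableOn.intervalIntegrable
    rw [Set.uIcc]
    exact hzint _ _ (min_mem_I hc hd) (max_mem_I hc hd) i
  have hzAC : VecLocAC I z z' := by
    refine ⟨hzint, ?_⟩
    have key : ∀ r ∈ I, ∀ i, z r i = x t1 i + ∫ τ in t1..r, z' τ i := by
      intro r hr i
      rcases le_or_gt r t1 with hrt | hrt
      · have e1 : ∫ τ in t1..r, z' τ i = ∫ τ in t1..r, x' τ i := by
          apply intervalIntegral.integral_congr_ae
          apply Eventually.of_forall
          intro τ hτ
          rw [Set.uIoc_comm, Set.uIoc_of_le hrt] at hτ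
          simp [hz', hτ.2]
        rw [e1]
        have := hAC.2 t1 r ht1 hr i
        simp only [hz, if_pos hrt]
        exact this
      · have e1 : ∫ τ in t1..r, z' τ i = ∫ τ in t1..r, w' τ i := by
          apply intervalIntegral.integral_congr_ae
          apply Eventually.of_forall
          intro τ hτ
          rw [Set.uIoc_of_le hrt.le] at hτ
          simp [hz', not_le.mpr hτ.1]
        rw [e1]
        have h2 := hwAC.2 t1 r ht1 hr i
        have h3 : w t1 i = x t1 i := by rw [hw1]
        simp only [hz, if_neg (not_le.mpr hrt)]
        rw [h2, h3]
    intro p q hp hq i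
    have h1 := key p hp i
    have h2 := key q hq i
    have hadd : (∫ τ in p..t1, z' τ i) + ∫ τ in t1..q, z' τ i = ∫ τ in p..q, z' τ i :=
      intervalIntegral.integral_add_adjacent_intervals (hzi p t1 hp ht1 i) (hzi t1 q ht1 hq i)
    have hsym : ∫ τ in p..t1, z' τ i = - ∫ τ in t1..p, z' τ i :=
      intervalIntegral.integral_symm _ _
    rw [h2, h1, ← hadd, hsym]
    ring
  set yz : ℝ → Fin m → ℂ := fun t => C t *ᵥ z t + D t *ᵥ v t with hyz
  have hyzLp : VecMemLocLp 2 I yz :=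
    memLp2_output hIconn hLTV.2.2.1 hLTV.2.2.2 hzAC hvLp
  have hsolz : IsSIOSol I A B C D z v yz := by
    refine ⟨hvLp, hyzLp, ⟨z', hzAC, ?_⟩, ?_⟩
    · filter_upwards [hODE, hwODE] with t hxt hwt htI
      by_cases hle : t ≤ t1
      · have hvu : v t = u t := by funext i; simp [hv, hle]
        have hzx : z t = x t := by simp [hz, hle]
        have hz'x : z' t = x' t := by simp [hz', hle]
        rw [hz'x, hzx, hvu]
        exact hxt htI
      · have hzw : z t = w t := by simp [hz, hle]
        have hz'w : z' t = w' t := by simp [hz', hle]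
        rw [hz'w, hzw]
        exact hwt htI
    · filter_upwards with t htI
      rfl
  refine ⟨z, v, yz, hsolz, by simp [hz, h01], ?_⟩
  have hIcc : Icc t0 t1 ⊆ I := hIconn.out ht0 ht1
  have hsplit : supply v yz t0 s
      = supply v yz t0 t1 + ∫ t in t1..s, (star (yz t) ⬝ᵥ v t).re := by
    unfold supply
    rw [intervalIntegral.integral_add_adjacent_intervals
      (supply_intervalIntegrable hvLp hyzLp ht0 ht1)
      (supply_intervalIntegrable hvLp hyzLp ht1 hs)]
  have hzero : (∫ t in t1..s, (star (yz t) ⬝ᵥ v t).re) = 0 := by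
    have : ∀ t ∈ Set.uIoc t1 s, (star (yz t) ⬝ᵥ v t).re = (0:ℝ) := by
      intro t ht
      rw [Set.uIoc_of_le h1s] at ht
      have hv0 : v t = 0 := by
        funext i
        simp [hv, not_le.mpr ht.1]
      rw [hv0, dotProduct_zero]
      simp
    rw [intervalIntegral.integral_congr_ae (Eventually.of_forall this)]
    simp
  have hfirst : supply v yz t0 t1 = supply u y t0 t1 := by
    unfold supply
    apply intervalIntegral.integral_congr_ae
    filter_upwards [hout] with t hyt ht
    rw [Set.uIoc_of_le h01] at ht
    have htI : t ∈ I := hIcc ⟨ht.1.le, ht.2⟩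
    have hvu : v t = u t := by funext i; simp [hv, ht.2]
    have hzx : z t = x t := by simp [hz, ht.2]
    rw [hvu, hyz]
    simp only
    rw [hzx, hvu, ← hyt htI]
  rw [hsplit, hzero, hfirst]
  ring

end Ext


section WProps

set_option linter.unusedSectionVars false
set_option maxHeartbeats 800000

variable {n m : ℕ} {I : Set ℝ}
variable {A : ℝ → Matrix (Fin n) (Fin n) ℂ} {B : ℝ → Matrix (Fin n) (Fin m) ℂ}
variable {C : ℝ → Matrix (Fin m) (Fin n) ℂ} {D : ℝ → Matrix (Fin m) (Fin m) ℂ}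
variable (hIconn : I.OrdConnected) (hLTV : IsLTV I A B C D) (hex : ExUniq I A B)
variable (hfin : ∀ t0 ∈ I, ∀ x0 : Fin n → ℂ, BddAbove (supplySet I A B C D t0 x0))

include hIconn hLTV hex hfin

lemma W_nonneg {t0 : ℝ} (ht0 : t0 ∈ I) (x0 : Fin n → ℂ) :
    0 ≤ sSup (supplySet I A B C D t0 x0) :=
  le_csSup (hfin t0 ht0 x0) (zero_mem_supplySet hIconn hLTV hex ht0 x0)

lemma Wsup_zero {t0 : ℝ} (ht0 : t0 ∈ I) :
    sSup (supplySet I A B C D t0 (0 : Fin n → ℂ)) = 0 := by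
  have hmem0 := zero_mem_supplySet hIconn hLTV hex ht0 (0 : Fin n → ℂ)
  refine le_antisymm (csSup_le ⟨0, hmem0⟩ ?_) (le_csSup (hfin t0 ht0 0) hmem0)
  intro c hc
  by_contra hpos
  push_neg at hpos
  obtain ⟨M, hM⟩ := hfin t0 ht0 (0 : Fin n → ℂ)
  have hM0 : 0 ≤ M := hM hmem0
  have hr : ∀ r : ℝ, 0 ≤ r → r * c ≤ M := by
    intro r hr0
    have hmem := smul_mem_supplySet (I := I) (A := A) (B := B) (C := C) (D := D)
      ((Real.sqrt r : ℝ) : ℂ) hc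
    have hnorm : ‖((Real.sqrt r : ℝ) : ℂ)‖^2 = r := by
      rw [Complex.norm_real, Real.norm_eq_abs, abs_of_nonneg (Real.sqrt_nonneg r),
        Real.sq_sqrt hr0]
    rw [hnorm, smul_zero] at hmem
    exact hM hmem
  have h1 := hr ((M + 1) / c) (div_nonneg (by linarith) hpos.le)
  rw [div_mul_cancel₀ _ (ne_of_gt hpos)] at h1
  linarith

lemma parallelogram_core {t0 : ℝ} (ht0 : t0 ∈ I) (x1 x2 : Fin n → ℂ) {c d : ℝ}
    (hc : c ∈ supplySet I A B C D t0 (x1 + x2)) (hd : d ∈ supplySet I A B C D t0 (x1 - x2)) :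
    c + d ≤ 2 * sSup (supplySet I A B C D t0 x1) + 2 * sSup (supplySet I A B C D t0 x2) := by
  obtain ⟨ta, xa, ua, ya, hta, h0a, hsola, hxa0, rfl⟩ := hc
  obtain ⟨tb, xb, ub, yb, htb, h0b, hsolb, hxb0, rfl⟩ := hd
  set s := max ta tb with hsdef
  have hsI : s ∈ I := max_mem_I hta htb
  have h0s : t0 ≤ s := le_trans h0a (le_max_left _ _)
  obtain ⟨za, va, wa, hsola', hza0, hsupa⟩ :=
    exists_extension hIconn hLTV hex hsola ht0 hta hsI h0a (le_max_left _ _)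
  obtain ⟨zb, vb, wb, hsolb', hzb0, hsupb⟩ :=
    exists_extension hIconn hLTV hex hsolb ht0 htb hsI h0b (le_max_right _ _)
  have hP := hsola'.combo (2⁻¹:ℂ) (2⁻¹:ℂ) hsolb'
  have hM := hsola'.combo (2⁻¹:ℂ) (-2⁻¹:ℂ) hsolb'
  have hPx0 : (fun t => (2⁻¹:ℂ) • za t + (2⁻¹:ℂ) • zb t) t0 = x1 := by
    simp only
    rw [hza0, hxa0, hzb0, hxb0]
    module
  have hMx0 : (fun t => (2⁻¹:ℂ) • za t + (-2⁻¹:ℂ) • zb t) t0 = x2 := by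
    simp only
    rw [hza0, hxa0, hzb0, hxb0]
    module
  have hmemP : -(supply (fun t => (2⁻¹:ℂ) • va t + (2⁻¹:ℂ) • vb t)
      (fun t => (2⁻¹:ℂ) • wa t + (2⁻¹:ℂ) • wb t) t0 s) ∈ supplySet I A B C D t0 x1 :=
    ⟨s, _, _, _, hsI, h0s, hP, hPx0, rfl⟩
  have hmemM : -(supply (fun t => (2⁻¹:ℂ) • va t + (-2⁻¹:ℂ) • vb t)
      (fun t => (2⁻¹:ℂ) • wa t + (-2⁻¹:ℂ) • wb t) t0 s) ∈ supplySet I A B C D t0 x2 :=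
    ⟨s, _, _, _, hsI, h0s, hM, hMx0, rfl⟩
  have hle1 := le_csSup (hfin t0 ht0 x1) hmemP
  have hle2 := le_csSup (hfin t0 ht0 x2) hmemM
  have hpar := supply_parallelogram (I := I) hsola'.1 hsola'.2.1 hsolb'.1 hsolb'.2.1 ht0 hsI
  rw [hsupa, hsupb] at hpar
  linarith

lemma Wsup_smul (lam : ℂ) {t0 : ℝ} (ht0 : t0 ∈ I) (x0 : Fin n → ℂ) :
    sSup (supplySet I A B C D t0 (lam • x0))
      = ‖lam‖^2 * sSup (supplySet I A B C D t0 x0) := by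
  by_cases hlam : lam = 0
  · subst hlam
    rw [zero_smul, Wsup_zero hIconn hLTV hex hfin ht0]
    simp
  · have key : ∀ (mu : ℂ), mu ≠ 0 → ∀ v : Fin n → ℂ,
        sSup (supplySet I A B C D t0 (mu • v)) ≤ ‖mu‖^2 * sSup (supplySet I A B C D t0 v) := by
      intro mu hmu v
      apply csSup_le ⟨0, zero_mem_supplySet hIconn hLTV hex ht0 _⟩
      intro c hc
      have hmem := smul_mem_supplySet (I := I) (A := A) (B := B) (C := C) (D := D) mu⁻¹ hc
      rw [smul_smul, inv_mul_cancel₀ hmu, one_smul] at hmem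
      have hle := le_csSup (hfin t0 ht0 v) hmem
      have hmupos : 0 < ‖mu‖ := norm_pos_iff.mpr hmu
      have hpos : 0 < ‖mu‖^2 := by positivity
      rw [norm_inv] at hle
      have h2 : ‖mu‖⁻¹ ^ 2 = (‖mu‖^2)⁻¹ := by rw [inv_pow]
      rw [h2] at hle
      have h3 := mul_le_mul_of_nonneg_left hle hpos.le
      rw [← mul_assoc, mul_inv_cancel₀ (ne_of_gt hpos), one_mul] at h3
      exact h3
    apply le_antisymm (key lam hlam x0)
    have h2 := key lam⁻¹ (inv_ne_zero hlam) (lam • x0)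
    rw [smul_smul, inv_mul_cancel₀ hlam, one_smul, norm_inv, inv_pow] at h2
    have hlampos : 0 < ‖lam‖ := norm_pos_iff.mpr hlam
    have hpos : 0 < ‖lam‖^2 := by positivity
    have h3 := mul_le_mul_of_nonneg_left h2 hpos.le
    rw [← mul_assoc, mul_inv_cancel₀ (ne_of_gt hpos), one_mul] at h3
    exact h3

lemma Wsup_par {t0 : ℝ} (ht0 : t0 ∈ I) (x1 x2 : Fin n → ℂ) :
    sSup (supplySet I A B C D t0 (x1 + x2)) + sSup (supplySet I A B C D t0 (x1 - x2))
      = 2 * sSup (supplySet I A B C D t0 x1) + 2 * sSup (supplySet I A B C D t0 x2) := by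
  have hle : ∀ y1 y2 : Fin n → ℂ,
      sSup (supplySet I A B C D t0 (y1 + y2)) + sSup (supplySet I A B C D t0 (y1 - y2))
        ≤ 2 * sSup (supplySet I A B C D t0 y1) + 2 * sSup (supplySet I A B C D t0 y2) := by
    intro y1 y2
    have hne1 : (supplySet I A B C D t0 (y1 + y2)).Nonempty :=
      ⟨0, zero_mem_supplySet hIconn hLTV hex ht0 _⟩
    have hne2 : (supplySet I A B C D t0 (y1 - y2)).Nonempty :=
      ⟨0, zero_mem_supplySet hIconn hLTV hex ht0 _⟩
    have h1 : sSup (supplySet I A B C D t0 (y1 + y2))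
        ≤ 2 * sSup (supplySet I A B C D t0 y1) + 2 * sSup (supplySet I A B C D t0 y2)
          - sSup (supplySet I A B C D t0 (y1 - y2)) := by
      apply csSup_le hne1
      intro c hc
      have h2 : sSup (supplySet I A B C D t0 (y1 - y2))
          ≤ 2 * sSup (supplySet I A B C D t0 y1) + 2 * sSup (supplySet I A B C D t0 y2) - c := by
        apply csSup_le hne2
        intro d hd
        linarith [parallelogram_core hIconn hLTV hex hfin ht0 y1 y2 hc hd]
      linarith
    linarith
  have h1 := hle x1 x2
  have h2 := hle (x1 + x2) (x1 - x2)
  have e1 : (x1 + x2) + (x1 - x2) = (2:ℂ) • x1 := by module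
  have e2 : (x1 + x2) - (x1 - x2) = (2:ℂ) • x2 := by module
  rw [e1, e2, Wsup_smul hIconn hLTV hex hfin (2:ℂ) ht0 x1,
    Wsup_smul hIconn hLTV hex hfin (2:ℂ) ht0 x2] at h2
  have hn2 : ‖(2:ℂ)‖^2 = 4 := by
    rw [Complex.norm_ofNat]
    norm_num
  rw [hn2] at h2
  linarith

end WProps


/-- if the available storage is finite, it is a quadratic form
`V_a(t0, x0) = ½ x0^* Q(t0) x0` for some pointwise Hermitian PSD `Q`. -/
theorem statement10 {n m : ℕ} (I : Set ℝ) (hIopen : IsOpen I) (hIconn : I.OrdConnected)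
    (A : ℝ → Matrix (Fin n) (Fin n) ℂ) (B : ℝ → Matrix (Fin n) (Fin m) ℂ)
    (C : ℝ → Matrix (Fin m) (Fin n) ℂ) (D : ℝ → Matrix (Fin m) (Fin m) ℂ)
    (hLTV : IsLTV I A B C D)
    (hexuniq : ∀ t0 ∈ I, ∀ x0 : Fin n → ℂ, ∀ u : ℝ → Fin m → ℂ, VecMemLocLp 2 I u →
        ∃ x x' : ℝ → Fin n → ℂ, VecLocAC I x x' ∧
          (∀ᵐ t ∂volume, t ∈ I → x' t = A t *ᵥ x t + B t *ᵥ u t) ∧ x t0 = x0 ∧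
          ∀ z z' : ℝ → Fin n → ℂ, VecLocAC I z z' →
            (∀ᵐ t ∂volume, t ∈ I → z' t = A t *ᵥ z t + B t *ᵥ u t) → z t0 = x0 →
            ∀ t ∈ I, z t = x t)
    (hfin : ∀ t0 ∈ I, ∀ x0 : Fin n → ℂ, BddAbove (supplySet I A B C D t0 x0)) :
    ∃ Q : ℝ → Matrix (Fin n) (Fin n) ℂ, (∀ t ∈ I, (Q t).PosSemidef) ∧
      ∀ t0 ∈ I, ∀ x0 : Fin n → ℂ,
        sSup (supplySet I A B C D t0 x0) = quadStorage Q t0 x0 := by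
  have hex : ExUniq I A B := hexuniq
  have hQ : ∀ t : ℝ, ∃ Q : Matrix (Fin n) (Fin n) ℂ, t ∈ I →
      (Q.PosSemidef ∧ ∀ x : Fin n → ℂ,
        star x ⬝ᵥ (Q *ᵥ x) = ((2 * sSup (supplySet I A B C D t x) : ℝ) : ℂ)) := by
    intro t
    by_cases ht : t ∈ I
    · obtain ⟨Q, hpsd, hval⟩ := exists_psd_matrix (fun x => sSup (supplySet I A B C D t x))
        (fun x => W_nonneg hIconn hLTV hex hfin ht x)
        (fun c x => Wsup_smul hIconn hLTV hex hfin c ht x)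
        (fun x y => Wsup_par hIconn hLTV hex hfin ht x y)
      exact ⟨Q, fun _ => ⟨hpsd, hval⟩⟩
    · exact ⟨0, fun h => absurd h ht⟩
  choose Q hQ using hQ
  refine ⟨Q, fun t ht => (hQ t ht).1, ?_⟩
  intro t0 ht0 x0
  have hval := (hQ t0 ht0).2 x0
  unfold quadStorage
  rw [hval, Complex.ofReal_re]
  ring

end Paper
end

section
/- Let n ∈ ℕ, let I ⊆ ℝ be an open interval, and let Q : I → ℂ^{n×n} be pointwise Hermitian positive semidefinite and weakly decreasing. Let t₋₁ < t0 < t1 in I, and suppose L, R ∈ ℂ^{n×n} are such that Q(t) → L as t → t0 from the left and Q(t) → R as t → t0 from the right. Then ker Q(t₋₁) ⊆ ker L ⊆ ker Q(t0) ⊆ ker R ⊆ ker Q(t1), where ker M := { v ∈ ℂ^n : Mv = 0 }. -/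
open MeasureTheory Matrix Set Filter Topology
open scoped ComplexOrder ENNReal

namespace Paper

private lemma quad_tendsto {n : ℕ} {Q : ℝ → Matrix (Fin n) (Fin n) ℂ} {L : Matrix (Fin n) (Fin n) ℂ}
    {l : Filter ℝ} (hL : ∀ i j, Tendsto (fun s => Q s i j) l (𝓝 (L i j))) (v : Fin n → ℂ) :
    Tendsto (fun s => star v ⬝ᵥ (Q s *ᵥ v)) l (𝓝 (star v ⬝ᵥ (L *ᵥ v))) := by
  simp only [dotProduct, mulVec, Pi.star_apply]
  exact tendsto_finset_sum _ fun i _ =>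
    (tendsto_const_nhds.mul (tendsto_finset_sum _ fun j _ => (hL i j).mul tendsto_const_nhds))

private lemma psd_of_tendsto {n : ℕ} {Q : ℝ → Matrix (Fin n) (Fin n) ℂ}
    {L : Matrix (Fin n) (Fin n) ℂ}
    {l : Filter ℝ} [l.NeBot] (hev : ∀ᶠ s in l, (Q s).PosSemidef)
    (hL : ∀ i j, Tendsto (fun s => Q s i j) l (𝓝 (L i j))) : L.PosSemidef := by
  haveI := Complex.orderClosedTopology
  refine posSemidef_iff_dotProduct_mulVec.mpr ⟨?_, ?_⟩
  · ext i j
    have h1 : Tendsto (fun s => (Q s)ᴴ i j) l (𝓝 (Lᴴ i j)) := by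
      simpa [conjTranspose_apply, Function.comp_def] using (Complex.continuous_conj.tendsto _).comp (hL j i)
    have h2 : Tendsto (fun s => (Q s)ᴴ i j) l (𝓝 (L i j)) := by
      refine (hL i j).congr' ?_
      filter_upwards [hev] with s hs
      rw [hs.1]
    exact tendsto_nhds_unique h1 h2
  · intro v
    refine ge_of_tendsto (quad_tendsto hL v) ?_
    filter_upwards [hev] with s hs using hs.dotProduct_mulVec_nonneg v

private lemma ker_mono {n : ℕ} {M N : Matrix (Fin n) (Fin n) ℂ} (hM : M.PosSemidef)
    (hMN : (N - M).PosSemidef) (v : Fin n → ℂ) (hv : N *ᵥ v = 0) : M *ᵥ v = 0 := by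
  have h1 : (0 : ℂ) ≤ star v ⬝ᵥ ((N - M) *ᵥ v) := hMN.dotProduct_mulVec_nonneg v
  rw [sub_mulVec, dotProduct_sub, hv, dotProduct_zero, zero_sub] at h1
  have h2 : (0 : ℂ) ≤ star v ⬝ᵥ (M *ᵥ v) := hM.dotProduct_mulVec_nonneg v
  have h3 : star v ⬝ᵥ (M *ᵥ v) = 0 := le_antisymm (neg_nonneg.mp h1) h2
  exact (hM.dotProduct_mulVec_zero_iff v).mp h3

/-- kernel inclusion chain for a weakly decreasing pointwise Hermitian PSD
matrix function and its one-sided limits. -/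
theorem statement12 {n : ℕ} (I : Set ℝ) (hIopen : IsOpen I) (hIconn : I.OrdConnected)
    (Q : ℝ → Matrix (Fin n) (Fin n) ℂ) (hQpsd : ∀ t ∈ I, (Q t).PosSemidef)
    (hdec : ∀ t0 t1 : ℝ, t0 ∈ I → t1 ∈ I → t0 ≤ t1 → LoewnerLE (Q t1) (Q t0))
    (tm t0 t1 : ℝ) (htm : tm ∈ I) (ht0 : t0 ∈ I) (ht1 : t1 ∈ I)
    (hlt1 : tm < t0) (hlt2 : t0 < t1)
    (L R : Matrix (Fin n) (Fin n) ℂ)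
    (hL : ∀ i j, Tendsto (fun s => Q s i j) (𝓝[<] t0) (𝓝 (L i j)))
    (hR : ∀ i j, Tendsto (fun s => Q s i j) (𝓝[>] t0) (𝓝 (R i j))) :
    (∀ v : Fin n → ℂ, Q tm *ᵥ v = 0 → L *ᵥ v = 0) ∧
    (∀ v : Fin n → ℂ, L *ᵥ v = 0 → Q t0 *ᵥ v = 0) ∧
    (∀ v : Fin n → ℂ, Q t0 *ᵥ v = 0 → R *ᵥ v = 0) ∧
    (∀ v : Fin n → ℂ, R *ᵥ v = 0 → Q t1 *ᵥ v = 0) := by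
  have hIn : I ∈ 𝓝 t0 := hIopen.mem_nhds ht0
  have hevL : ∀ᶠ s in 𝓝[<] t0, s ∈ I ∧ tm ≤ s ∧ s ≤ t0 := by
    filter_upwards [mem_nhdsWithin_of_mem_nhds hIn,
      mem_nhdsWithin_of_mem_nhds (Ioi_mem_nhds hlt1), self_mem_nhdsWithin] with s h1 h2 h3
    exact ⟨h1, le_of_lt h2, le_of_lt h3⟩
  have hevR : ∀ᶠ s in 𝓝[>] t0, s ∈ I ∧ t0 ≤ s ∧ s ≤ t1 := by
    filter_upwards [mem_nhdsWithin_of_mem_nhds hIn,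
      mem_nhdsWithin_of_mem_nhds (Iio_mem_nhds hlt2), self_mem_nhdsWithin] with s h1 h2 h3
    exact ⟨h1, le_of_lt h3, le_of_lt h2⟩
  have hLpsd : L.PosSemidef := by
    refine psd_of_tendsto ?_ hL
    filter_upwards [hevL] with s hs using hQpsd s hs.1
  have hRpsd : R.PosSemidef := by
    refine psd_of_tendsto ?_ hR
    filter_upwards [hevR] with s hs using hQpsd s hs.1
  have hQtmL : (Q tm - L).PosSemidef := by
    refine psd_of_tendsto (Q := fun s => Q tm - Q s) (l := 𝓝[<] t0) ?_ ?_
    · filter_upwards [hevL] with s hs using hdec tm s htm hs.1 hs.2.1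
    · intro i j
      simpa using tendsto_const_nhds.sub (hL i j)
  have hLQt0 : (L - Q t0).PosSemidef := by
    refine psd_of_tendsto (Q := fun s => Q s - Q t0) (l := 𝓝[<] t0) ?_ ?_
    · filter_upwards [hevL] with s hs using hdec s t0 hs.1 ht0 hs.2.2
    · intro i j
      simpa using (hL i j).sub tendsto_const_nhds
  have hQt0R : (Q t0 - R).PosSemidef := by
    refine psd_of_tendsto (Q := fun s => Q t0 - Q s) (l := 𝓝[>] t0) ?_ ?_
    · filter_upwards [hevR] with s hs using hdec t0 s ht0 hs.1 hs.2.1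
    · intro i j
      simpa using tendsto_const_nhds.sub (hR i j)
  have hRQt1 : (R - Q t1).PosSemidef := by
    refine psd_of_tendsto (Q := fun s => Q s - Q t1) (l := 𝓝[>] t0) ?_ ?_
    · filter_upwards [hevR] with s hs using hdec s t1 hs.1 ht1 hs.2.2
    · intro i j
      simpa using (hR i j).sub tendsto_const_nhds
  exact ⟨fun v hv => ker_mono hLpsd hQtmL v hv,
    fun v hv => ker_mono (hQpsd t0 ht0) hLQt0 v hv,
    fun v hv => ker_mono hRpsd hQt0R v hv,
    fun v hv => ker_mono (hQpsd t1 ht1) hRQt1 v hv⟩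


end Paper
end

section
/- Let n ∈ ℕ, let I ⊆ ℝ be an open interval, and let Q : I → ℂ^{n×n} be pointwise Hermitian positive semidefinite and weakly decreasing. Then there exists a constant invertible matrix V ∈ ℂ^{n×n} such that, for every t ∈ I, writing r(t) = rank Q(t), the matrix Q̃(t) := V* Q(t) V satisfies: Q̃(t)_{ij} = 0 whenever i > r(t) or j > r(t), and the top-left r(t)×r(t) block of Q̃(t) is Hermitian positive definite. Moreover, for every t ∈ I at which a one-sided limit L = lim_{s→t⁻} Q(s) (respectively L = lim_{s→t⁺} Q(s)) exists, V* L V has the same block structure with r(t) replaced by rank L. -/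
open MeasureTheory Matrix Set Filter Topology
open scoped ComplexOrder ENNReal

namespace Paper

section Aux14
open Module
variable {n : ℕ}

lemma loewnerLE_refl (M : Matrix (Fin n) (Fin n) ℂ) : LoewnerLE M M := by
  unfold LoewnerLE; simpa using Matrix.PosSemidef.zero

lemma loewnerLE_trans {A B C : Matrix (Fin n) (Fin n) ℂ} (h1 : LoewnerLE A B)
    (h2 : LoewnerLE B C) : LoewnerLE A C := by
  have := h2.add h1
  unfold LoewnerLE at *
  convert this using 1; abel

lemma psd_of_loewner {A B : Matrix (Fin n) (Fin n) ℂ} (hA : A.PosSemidef)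
    (h : LoewnerLE A B) : B.PosSemidef := by
  have := h.add hA
  simpa using this

lemma ker_le_of_loewner {M N : Matrix (Fin n) (Fin n) ℂ} (hM : M.PosSemidef)
    (h : LoewnerLE M N) :
    LinearMap.ker N.mulVecLin ≤ LinearMap.ker M.mulVecLin := by
  intro x hx
  rw [LinearMap.mem_ker, Matrix.mulVecLin_apply] at hx ⊢
  have h0 : star x ⬝ᵥ N *ᵥ x = 0 := by rw [hx, dotProduct_zero]
  have h1 : (0:ℂ) ≤ star x ⬝ᵥ (N - M) *ᵥ x := h.dotProduct_mulVec_nonneg x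
  rw [Matrix.sub_mulVec, dotProduct_sub, h0, zero_sub, le_neg, neg_zero] at h1
  have h2 := hM.dotProduct_mulVec_nonneg x
  exact (hM.dotProduct_mulVec_zero_iff x).mp (le_antisymm h1 h2)

lemma tendsto_quadform {l : Filter ℝ} {F : ℝ → Matrix (Fin n) (Fin n) ℂ}
    {L : Matrix (Fin n) (Fin n) ℂ}
    (h : ∀ i j, Tendsto (fun s => F s i j) l (𝓝 (L i j))) (x : Fin n → ℂ) :
    Tendsto (fun s => star x ⬝ᵥ F s *ᵥ x) l (𝓝 (star x ⬝ᵥ L *ᵥ x)) := by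
  simp only [dotProduct, Matrix.mulVec, Pi.star_apply]
  refine tendsto_finset_sum _ fun i _ => ?_
  exact tendsto_const_nhds.mul
    (tendsto_finset_sum _ fun j _ => (h i j).mul tendsto_const_nhds)

lemma psd_limit {l : Filter ℝ} [l.NeBot] {F : ℝ → Matrix (Fin n) (Fin n) ℂ}
    {L : Matrix (Fin n) (Fin n) ℂ}
    (h : ∀ i j, Tendsto (fun s => F s i j) l (𝓝 (L i j)))
    (hev : ∀ᶠ s in l, (F s).PosSemidef) : L.PosSemidef := by
  refine Matrix.PosSemidef.of_dotProduct_mulVec_nonneg ?_ ?_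
  · ext i j
    rw [Matrix.conjTranspose_apply]
    have h1 : Tendsto (fun s => star (F s j i)) l (𝓝 (star (L j i))) :=
      ((continuous_star.tendsto _).comp (h j i))
    have h2 : Tendsto (fun s => star (F s j i)) l (𝓝 (L i j)) := by
      refine (h i j).congr' ?_
      filter_upwards [hev] with s hs
      exact (hs.1.apply i j).symm ▸ rfl
    exact tendsto_nhds_unique h1 h2
  · intro x
    refine ge_of_tendsto (tendsto_quadform h x) ?_
    filter_upwards [hev] with s hs
    exact hs.dotProduct_mulVec_nonneg x

lemma loewner_limit_left {l : Filter ℝ} [l.NeBot] {F : ℝ → Matrix (Fin n) (Fin n) ℂ}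
    {L A : Matrix (Fin n) (Fin n) ℂ}
    (h : ∀ i j, Tendsto (fun s => F s i j) l (𝓝 (L i j)))
    (hev : ∀ᶠ s in l, LoewnerLE A (F s)) : LoewnerLE A L := by
  refine psd_limit (F := fun s => F s - A) (fun i j => ?_) hev
  simpa [Matrix.sub_apply] using (h i j).sub tendsto_const_nhds

lemma loewner_limit_right {l : Filter ℝ} [l.NeBot] {F : ℝ → Matrix (Fin n) (Fin n) ℂ}
    {L A : Matrix (Fin n) (Fin n) ℂ}
    (h : ∀ i j, Tendsto (fun s => F s i j) l (𝓝 (L i j)))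
    (hev : ∀ᶠ s in l, LoewnerLE (F s) A) : LoewnerLE L A := by
  refine psd_limit (F := fun s => A - F s) (fun i j => ?_) hev
  simpa [Matrix.sub_apply] using tendsto_const_nhds.sub (h i j)

end Aux14

section Aux14b
open Module

lemma exists_between {E : Type*} [AddCommGroup E] [Module ℂ E] [FiniteDimensional ℂ E] :
    ∀ (m : ℕ) (U W : Submodule ℂ E), U ≤ W → finrank ℂ U ≤ m → m ≤ finrank ℂ W →
    ∃ W', U ≤ W' ∧ W' ≤ W ∧ finrank ℂ W' = m := by
  intro m
  induction m with
  | zero => exact fun U W hUW hU _ => ⟨U, le_rfl, hUW, Nat.le_zero.mp hU⟩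
  | succ m ih =>
    intro U W hUW hU hW
    by_cases hcase : finrank ℂ U = m + 1
    · exact ⟨U, le_rfl, hUW, hcase⟩
    · have hU' : finrank ℂ U ≤ m := by omega
      obtain ⟨W', hUW', hW'W, hrk⟩ := ih U W hUW hU' (by omega)
      have hne : W' ≠ W := fun h => by rw [h] at hrk; omega
      obtain ⟨x, hxW, hxW'⟩ := SetLike.exists_of_lt (lt_of_le_of_ne hW'W hne)
      have hx0 : x ≠ 0 := fun h => hxW' (h ▸ W'.zero_mem)
      refine ⟨W' ⊔ Submodule.span ℂ {x}, le_trans hUW' le_sup_left, ?_, ?_⟩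
      · exact sup_le hW'W ((Submodule.span_singleton_le_iff_mem x W).mpr hxW)
      · have hle : finrank ℂ ↥(W' ⊔ Submodule.span ℂ {x}) ≤ m + 1 := by
          have := Submodule.finrank_sup_add_finrank_inf_eq W' (Submodule.span ℂ {x})
          have h1 : finrank ℂ (Submodule.span ℂ {x}) = 1 := finrank_span_singleton hx0
          omega
        have hlt : W' < W' ⊔ Submodule.span ℂ {x} := by
          refine lt_of_le_of_ne le_sup_left fun h => hxW' ?_
          rw [h]
          exact Submodule.mem_sup_right (Submodule.mem_span_singleton_self x)
        have := Submodule.finrank_lt_finrank_of_lt hlt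
        omega

lemma sum_restrict {n r : ℕ} (h : r ≤ n) (g : Fin n → ℂ)
    (hg : ∀ q : Fin n, r ≤ (q : ℕ) → g q = 0) :
    ∑ q, g q = ∑ j : Fin r, g (Fin.castLE h j) := by
  classical
  have h1 : ∑ j : Fin r, g (Fin.castLE h j)
      = ∑ q ∈ Finset.univ.map (Fin.castLEEmb h), g q := by
    rw [Finset.sum_map]
    rfl
  rw [h1]
  refine (Finset.sum_subset (Finset.subset_univ _) ?_).symm
  intro q _ hq
  refine hg q ?_
  by_contra hlt
  push_neg at hlt
  refine hq (Finset.mem_map.mpr ⟨⟨(q : ℕ), hlt⟩, Finset.mem_univ _, ?_⟩)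
  simp [Fin.castLEEmb, Fin.ext_iff]

lemma lemmaA (n : ℕ) (S : Set (Matrix (Fin n) (Fin n) ℂ))
    (hpsd : ∀ M ∈ S, M.PosSemidef)
    (hcomp : ∀ M ∈ S, ∀ N ∈ S, LinearMap.ker M.mulVecLin ≤ LinearMap.ker N.mulVecLin ∨
      LinearMap.ker N.mulVecLin ≤ LinearMap.ker M.mulVecLin) :
    ∃ V : Matrix (Fin n) (Fin n) ℂ, IsUnit V ∧
      ∀ M ∈ S, NSDStruct (Vᴴ * M * V) M.rank := by
  classical
  set Kset : Set (Submodule ℂ (Fin n → ℂ)) :=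
    (fun M => LinearMap.ker (Matrix.mulVecLin M)) '' S with hKset
  have hchain : ∀ K ∈ Kset, ∀ K' ∈ Kset, K ≤ K' ∨ K' ≤ K := by
    rintro K ⟨M, hM, rfl⟩ K' ⟨N, hN, rfl⟩
    exact hcomp M hM N hN
  have hsup : ∀ d : ℕ, finrank ℂ ↥(sSup {K ∈ Kset | finrank ℂ ↥K ≤ d}) ≤ d := by
    intro d
    set T := {K ∈ Kset | finrank ℂ ↥K ≤ d} with hT
    rcases T.eq_empty_or_nonempty with hTe | hTne
    · rw [hTe, sSup_empty]
      simp [finrank_bot]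
    · have hNne : ((fun K : Submodule ℂ (Fin n → ℂ) => finrank ℂ ↥K) '' T).Nonempty :=
        hTne.image _
      have hbdd : BddAbove ((fun K : Submodule ℂ (Fin n → ℂ) => finrank ℂ ↥K) '' T) := by
        refine ⟨d, ?_⟩
        rintro m ⟨K, hK, rfl⟩
        exact hK.2
      obtain ⟨K0, hK0T, hK0rk⟩ := Nat.sSup_mem hNne hbdd
      have hmax : ∀ K ∈ T, K ≤ K0 := by
        intro K hK
        rcases hchain K hK.1 K0 hK0T.1 with h | h
        · exact h
        · have h2 : finrank ℂ ↥K ≤ sSup ((fun K : Submodule ℂ (Fin n → ℂ) => finrank ℂ ↥K) '' T) :=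
            le_csSup hbdd ⟨K, hK, rfl⟩
          rw [← hK0rk] at h2
          exact le_of_eq (Submodule.eq_of_le_of_finrank_le h h2).symm
      have hsle : sSup T ≤ K0 := sSup_le hmax
      calc finrank ℂ ↥(sSup T) ≤ finrank ℂ ↥K0 := Submodule.finrank_mono hsle
        _ ≤ d := hK0T.2
  have stepEx : ∀ (k : ℕ) (W : Submodule ℂ (Fin n → ℂ)), ∃ W', W' ≤ W ∧
      ((finrank ℂ ↥W = n - k ∧ ∀ K ∈ Kset, finrank ℂ ↥K ≤ n - k → K ≤ W) →
       (finrank ℂ ↥W' = n - (k+1) ∧ ∀ K ∈ Kset, finrank ℂ ↥K ≤ n - (k+1) → K ≤ W')) := by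
    intro k W
    by_cases hW : finrank ℂ ↥W = n - k ∧ ∀ K ∈ Kset, finrank ℂ ↥K ≤ n - k → K ≤ W
    · by_cases hkn : k < n
      · have hVdW : sSup {K ∈ Kset | finrank ℂ ↥K ≤ n - (k+1)} ≤ W := by
          refine sSup_le ?_
          rintro K ⟨hK1, hK2⟩
          exact hW.2 K hK1 (by omega)
        have hVdrk := hsup (n - (k+1))
        obtain ⟨W', hVW', hW'W, hrk⟩ :=
          exists_between (n - (k+1)) _ W hVdW hVdrk (by omega)
        refine ⟨W', hW'W, fun _ => ⟨hrk, fun K hK hKrk => ?_⟩⟩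
        have hKmem : K ∈ {K ∈ Kset | finrank ℂ ↥K ≤ n - (k+1)} := ⟨hK, hKrk⟩
        exact le_trans (le_sSup hKmem) hVW'
      · refine ⟨W, le_rfl, fun _ => ⟨?_, ?_⟩⟩
        · omega
        · intro K hK hKrk
          exact hW.2 K hK (by omega)
    · exact ⟨W, le_rfl, fun h => absurd h hW⟩
  set g : ℕ → Submodule ℂ (Fin n → ℂ) :=
    fun k => Nat.rec ⊤ (fun k W => Classical.choose (stepEx k W)) k with hg
  have hprop : ∀ k, finrank ℂ ↥(g k) = n - k ∧
      ∀ K ∈ Kset, finrank ℂ ↥K ≤ n - k → K ≤ g k := by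
    intro k
    induction k with
    | zero =>
      constructor
      · show finrank ℂ ↥(⊤ : Submodule ℂ (Fin n → ℂ)) = n - 0
        simp [finrank_top, Module.finrank_fin_fun]
      · exact fun K _ _ => le_top
    | succ k ih => exact (Classical.choose_spec (stepEx k (g k))).2 ih
  have hganti : Antitone g :=
    antitone_nat_of_succ_le fun k => (Classical.choose_spec (stepEx k (g k))).1
  set F : ℕ → Submodule ℂ (Fin n → ℂ) := fun d => g (n - d) with hF
  have hFrank : ∀ d, d ≤ n → finrank ℂ ↥(F d) = d := by
    intro d hd
    have h1 := (hprop (n - d)).1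
    show finrank ℂ ↥(g (n - d)) = d
    omega
  have hFmono : ∀ d d', d ≤ d' → F d ≤ F d' := by
    intro d d' h
    exact hganti (by omega)
  have hFker : ∀ K ∈ Kset, ∀ d, finrank ℂ ↥K ≤ d → d ≤ n → K ≤ F d := by
    intro K hK d h1 h2
    exact (hprop (n - d)).2 K hK (by omega)
  have hbex : ∀ i : Fin n, ∃ x, x ∈ F ((i : ℕ) + 1) ∧ x ∉ F (i : ℕ) := by
    intro i
    have hlt : F (i : ℕ) < F ((i : ℕ) + 1) := by
      refine lt_of_le_of_ne (hFmono _ _ (Nat.le_succ _)) fun h => ?_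
      have h1 := hFrank (i : ℕ) (by omega)
      have h2 := hFrank ((i : ℕ) + 1) (by omega)
      rw [h] at h1
      omega
    exact SetLike.exists_of_lt hlt
  choose b hb1 hb2 using hbex
  have hbmem : ∀ (i : Fin n) (d : ℕ), (i : ℕ) < d → b i ∈ F d := by
    intro i d hid
    exact hFmono _ _ (by omega) (hb1 i)
  have hspan : ∀ d, d ≤ n →
      F d ≤ Submodule.span ℂ (b '' {i : Fin n | (i : ℕ) < d}) := by
    intro d
    induction d with
    | zero =>
      intro _
      have hbot : F 0 = ⊥ := Submodule.finrank_eq_zero.mp (hFrank 0 (by omega))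
      rw [hbot]
      exact bot_le
    | succ d ih =>
      intro hd
      have hdn : d < n := by omega
      set i : Fin n := ⟨d, hdn⟩ with hi
      have hsup_le : F d ⊔ Submodule.span ℂ {b i} ≤ F (d + 1) := by
        refine sup_le (hFmono _ _ (Nat.le_succ _)) ?_
        rw [Submodule.span_singleton_le_iff_mem]
        exact hb1 i
      have heq : F (d + 1) = F d ⊔ Submodule.span ℂ {b i} := by
        refine (Submodule.eq_of_le_of_finrank_le hsup_le ?_).symm
        rw [hFrank (d+1) hd]
        have hlt : F d < F d ⊔ Submodule.span ℂ {b i} := by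
          refine lt_of_le_of_ne le_sup_left fun h => hb2 i ?_
          show b i ∈ F (i : ℕ)
          rw [hi]
          rw [h]
          exact Submodule.mem_sup_right (Submodule.mem_span_singleton_self _)
        have h2 := Submodule.finrank_lt_finrank_of_lt hlt
        rw [hFrank d (by omega)] at h2
        omega
      rw [heq]
      refine sup_le (le_trans (ih (by omega)) (Submodule.span_mono ?_)) ?_
      · exact Set.image_mono fun j hj => by simp only [Set.mem_setOf_eq] at hj ⊢; omega
      · rw [Submodule.span_singleton_le_iff_mem]
        exact Submodule.subset_span ⟨i, by simp [hi], rfl⟩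
  set c : Fin n → (Fin n → ℂ) := fun j => b (Fin.rev j) with hc
  set V : Matrix (Fin n) (Fin n) ℂ := Matrix.of fun i j => c j i with hV
  have hVcol : ∀ j : Fin n, V *ᵥ Pi.single j 1 = c j := by
    intro j
    ext i
    simp [hV, Matrix.mulVec_single]
  have hrange : LinearMap.range V.mulVecLin = ⊤ := by
    rw [Matrix.range_mulVecLin]
    have hcols : Set.range Vᵀ = Set.range c := by
      ext x
      constructor
      · rintro ⟨j, rfl⟩; exact ⟨j, rfl⟩
      · rintro ⟨j, rfl⟩; exact ⟨j, rfl⟩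
    rw [show Set.range V.col = Set.range Vᵀ from rfl, hcols]
    refine top_le_iff.mp ?_
    have h1 : (⊤ : Submodule ℂ (Fin n → ℂ)) = F n := by
      symm
      refine Submodule.eq_top_of_finrank_eq ?_
      rw [hFrank n le_rfl, Module.finrank_fin_fun]
    rw [h1]
    refine le_trans (hspan n le_rfl) (Submodule.span_mono ?_)
    rintro x ⟨j, _, rfl⟩
    exact ⟨Fin.rev j, by rw [hc]; simp⟩
  have hVunit : IsUnit V := by
    rw [← Matrix.mulVec_surjective_iff_isUnit]
    intro w
    have hmem : w ∈ LinearMap.range V.mulVecLin := by rw [hrange]; trivial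
    obtain ⟨y, hy⟩ := hmem
    exact ⟨y, hy⟩
  refine ⟨V, hVunit, ?_⟩
  intro M hM
  have hMpsd := hpsd M hM
  set r := M.rank with hr
  set k := finrank ℂ ↥(LinearMap.ker M.mulVecLin) with hk
  have hrk : r + k = n := by
    rw [hr, hk, Matrix.rank, LinearMap.finrank_range_add_finrank_ker, Module.finrank_fin_fun]
  have hkn : k ≤ n := by omega
  have hkerF : LinearMap.ker M.mulVecLin = F k := by
    refine Submodule.eq_of_le_of_finrank_le
      (hFker _ ⟨M, hM, rfl⟩ k le_rfl hkn) ?_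
    rw [hFrank k hkn]
  have hcker : ∀ j : Fin n, r ≤ (j : ℕ) → M *ᵥ c j = 0 := by
    intro j hj
    have h1 : b (Fin.rev j) ∈ F k := by
      refine hbmem _ _ ?_
      have hjlt := j.isLt
      rw [Fin.val_rev]
      omega
    rw [← hkerF] at h1
    simpa [hc, Matrix.mulVecLin_apply] using h1
  have hentry : ∀ i j, (Vᴴ * M * V) i j = star (c i) ⬝ᵥ (M *ᵥ c j) := by
    intro i j
    simp only [Matrix.mul_apply, Matrix.conjTranspose_apply, hV, Matrix.of_apply,
      dotProduct, Matrix.mulVec, Pi.star_apply, Finset.sum_mul, Finset.mul_sum]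
    rw [Finset.sum_comm]
    refine Finset.sum_congr rfl fun p _ => Finset.sum_congr rfl fun q _ => by ring
  have hherm : (Vᴴ * M * V).IsHermitian := Matrix.isHermitian_conjTranspose_mul_mul V hMpsd.1
  constructor
  · intro i j hij
    rcases hij with hi | hj
    · have h0 : (Vᴴ * M * V) j i = 0 := by
        rw [hentry, hcker i hi, dotProduct_zero]
      rw [← hherm.apply i j, h0, star_zero]
    · rw [hentry, hcker j hj, dotProduct_zero]
  · intro h
    refine Matrix.PosDef.of_dotProduct_mulVec_pos ?_ ?_
    · exact hherm.submatrix _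
    · intro x hx
      set y : Fin n → ℂ := fun p => if hp : (p : ℕ) < r then x ⟨p, hp⟩ else 0 with hy
      have hyc : ∀ i : Fin r, y (Fin.castLE h i) = x i := by
        intro i
        rw [hy]
        simp only [Fin.coe_castLE]
        rw [dif_pos i.isLt]
      have hy0 : ∀ q : Fin n, r ≤ (q : ℕ) → y q = 0 := fun q hq => dif_neg (by omega)
      have hvan1 : ∀ q : Fin n, r ≤ (q : ℕ) →
          star (y q) * (∑ p, (Vᴴ * M * V) q p * y p) = 0 := fun q hq => by
        rw [hy0 q hq, star_zero, zero_mul]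
      have hvan2 : ∀ (i : Fin r) (q : Fin n), r ≤ (q : ℕ) →
          (Vᴴ * M * V) (Fin.castLE h i) q * y q = 0 := fun i q hq => by
        rw [hy0 q hq, mul_zero]
      have hquad : star y ⬝ᵥ (Vᴴ * M * V) *ᵥ y
          = star x ⬝ᵥ ((Vᴴ * M * V).submatrix (Fin.castLE h) (Fin.castLE h)) *ᵥ x := by
        simp only [dotProduct, Matrix.mulVec, Matrix.submatrix_apply, Pi.star_apply]
        rw [sum_restrict h (fun p => star (y p) * ∑ q, (Vᴴ * M * V) p q * y q) hvan1]
        simp only [hyc]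
        refine Finset.sum_congr rfl fun i _ => ?_
        congr 1
        rw [sum_restrict h (fun q => (Vᴴ * M * V) (Fin.castLE h i) q * y q) (hvan2 i)]
        simp only [hyc]
      set w := V *ᵥ y with hw
      have hquad2 : star y ⬝ᵥ (Vᴴ * M * V) *ᵥ y = star w ⬝ᵥ M *ᵥ w := by
        have hmv : (Vᴴ * M * V) *ᵥ y = Vᴴ *ᵥ (M *ᵥ w) := by
          rw [hw, Matrix.mulVec_mulVec, Matrix.mulVec_mulVec, Matrix.mul_assoc]
        rw [hmv, Matrix.dotProduct_mulVec, ← Matrix.star_mulVec, ← hw]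
      have hge : (0 : ℂ) ≤ star w ⬝ᵥ M *ᵥ w := hMpsd.dotProduct_mulVec_nonneg w
      have hne : star w ⬝ᵥ M *ᵥ w ≠ 0 := by
        intro h0
        have hker : M *ᵥ w = 0 := (hMpsd.dotProduct_mulVec_zero_iff w).mp h0
        have hwmem : w ∈ Submodule.span ℂ (b '' {i : Fin n | (i : ℕ) < k}) := by
          refine hspan k hkn ?_
          rw [← hkerF]
          simpa [Matrix.mulVecLin_apply] using hker
        let Sr : Submodule ℂ (Fin n → ℂ) :=
          { carrier := {z | ∀ j : Fin n, (j : ℕ) < r → z j = 0}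
            add_mem' := fun ha hb j hj => by
              simp only [Pi.add_apply, ha j hj, hb j hj, add_zero]
            zero_mem' := fun j _ => rfl
            smul_mem' := fun a z hz j hj => by
              simp only [Pi.smul_apply, hz j hj, smul_zero] }
        have hspan_map : Submodule.span ℂ (b '' {i : Fin n | (i : ℕ) < k})
            ≤ Submodule.map V.mulVecLin Sr := by
          rw [Submodule.span_le]
          rintro _ ⟨i, hi, rfl⟩
          simp only [Set.mem_setOf_eq] at hi
          have hilt := i.isLt
          refine ⟨Pi.single (Fin.rev i) 1, ?_, ?_⟩
          · intro j hj
            have hne' : j ≠ Fin.rev i := by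
              refine Fin.ne_of_val_ne ?_
              rw [Fin.val_rev]
              omega
            exact Pi.single_eq_of_ne hne' 1
          · rw [Matrix.mulVecLin_apply, hVcol]
            simp only [hc, Fin.rev_rev]
        obtain ⟨z, hz, hzw⟩ := hspan_map hwmem
        have hinj : Function.Injective V.mulVec :=
          Matrix.mulVec_injective_iff_isUnit.mpr hVunit
        have hzy : z = y := by
          refine hinj ?_
          rw [Matrix.mulVecLin_apply] at hzw
          rw [hzw, hw]
        refine hx ?_
        ext i
        have h1 : z (Fin.castLE h i) = 0 := hz (Fin.castLE h i) (by simp only [Fin.coe_castLE]; exact i.isLt)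
        rw [← hyc i, ← hzy, h1]
        rfl
      rw [← hquad, hquad2]
      exact lt_of_le_of_ne hge (Ne.symm hne)

end Aux14b

/-- null space decomposition of a weakly decreasing pointwise Hermitian PSD
matrix function by a single constant invertible congruence, also valid for all existing
one-sided limits. -/
theorem statement14 {n : ℕ} (I : Set ℝ) (hIopen : IsOpen I) (hIconn : I.OrdConnected)
    (Q : ℝ → Matrix (Fin n) (Fin n) ℂ) (hQpsd : ∀ t ∈ I, (Q t).PosSemidef)
    (hdec : ∀ t0 t1 : ℝ, t0 ∈ I → t1 ∈ I → t0 ≤ t1 → LoewnerLE (Q t1) (Q t0)) :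
    ∃ V : Matrix (Fin n) (Fin n) ℂ, IsUnit V ∧
      (∀ t ∈ I, NSDStruct (Vᴴ * Q t * V) (Q t).rank) ∧
      ∀ t ∈ I, ∀ L : Matrix (Fin n) (Fin n) ℂ,
        ((∀ i j, Tendsto (fun s => Q s i j) (𝓝[<] t) (𝓝 (L i j))) ∨
         (∀ i j, Tendsto (fun s => Q s i j) (𝓝[>] t) (𝓝 (L i j)))) →
        NSDStruct (Vᴴ * L * V) L.rank := by
  classical
  have hevI_lt : ∀ t ∈ I, ∀ᶠ s in 𝓝[<] t, s ∈ I ∧ s < t := by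
    intro t ht
    have h1 : ∀ᶠ s in 𝓝[<] t, s ∈ I :=
      mem_nhdsWithin_of_mem_nhds (hIopen.mem_nhds ht)
    have h2 : ∀ᶠ s in 𝓝[<] t, s < t := self_mem_nhdsWithin
    exact h1.and h2
  have hevI_gt : ∀ t ∈ I, ∀ᶠ s in 𝓝[>] t, s ∈ I ∧ t < s := by
    intro t ht
    have h1 : ∀ᶠ s in 𝓝[>] t, s ∈ I :=
      mem_nhdsWithin_of_mem_nhds (hIopen.mem_nhds ht)
    have h2 : ∀ᶠ s in 𝓝[>] t, t < s := self_mem_nhdsWithin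
    exact h1.and h2
  -- sandwich facts
  have hGb : ∀ t ∈ I, ∀ M : Matrix (Fin n) (Fin n) ℂ,
      (M = Q t ∨ (∀ i j, Tendsto (fun s => Q s i j) (𝓝[<] t) (𝓝 (M i j))) ∨
       (∀ i j, Tendsto (fun s => Q s i j) (𝓝[>] t) (𝓝 (M i j)))) →
      ∀ s0 ∈ I, s0 < t → LoewnerLE M (Q s0) := by
    intro t ht M hM s0 hs0 hs0t
    rcases hM with rfl | hM | hM
    · exact hdec s0 t hs0 ht hs0t.le
    · refine loewner_limit_right hM ?_
      filter_upwards [hevI_lt t ht,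
        (eventually_gt_nhds hs0t).filter_mono nhdsWithin_le_nhds] with s hs hs0s
      exact hdec s0 s hs0 hs.1 hs0s.le
    · refine loewner_limit_right hM ?_
      filter_upwards [hevI_gt t ht] with s hs
      exact hdec s0 s hs0 hs.1 (by linarith [hs.2])
  have hGa : ∀ t ∈ I, ∀ M : Matrix (Fin n) (Fin n) ℂ,
      (M = Q t ∨ (∀ i j, Tendsto (fun s => Q s i j) (𝓝[<] t) (𝓝 (M i j))) ∨
       (∀ i j, Tendsto (fun s => Q s i j) (𝓝[>] t) (𝓝 (M i j)))) →
      ∀ s0 ∈ I, t < s0 → LoewnerLE (Q s0) M := by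
    intro t ht M hM s0 hs0 hts0
    rcases hM with rfl | hM | hM
    · exact hdec t s0 ht hs0 hts0.le
    · refine loewner_limit_left hM ?_
      filter_upwards [hevI_lt t ht] with s hs
      exact hdec s s0 hs.1 hs0 (by linarith [hs.2])
    · refine loewner_limit_left hM ?_
      filter_upwards [hevI_gt t ht,
        (eventually_lt_nhds hts0).filter_mono nhdsWithin_le_nhds] with s hs hss0
      exact hdec s s0 hs.1 hs0 hss0.le
  have hQleL : ∀ t ∈ I, ∀ M : Matrix (Fin n) (Fin n) ℂ,
      (∀ i j, Tendsto (fun s => Q s i j) (𝓝[<] t) (𝓝 (M i j))) →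
      LoewnerLE (Q t) M := by
    intro t ht M hM
    refine loewner_limit_left hM ?_
    filter_upwards [hevI_lt t ht] with s hs
    exact hdec s t hs.1 ht hs.2.le
  have hRleQ : ∀ t ∈ I, ∀ M : Matrix (Fin n) (Fin n) ℂ,
      (∀ i j, Tendsto (fun s => Q s i j) (𝓝[>] t) (𝓝 (M i j))) →
      LoewnerLE M (Q t) := by
    intro t ht M hM
    refine loewner_limit_right hM ?_
    filter_upwards [hevI_gt t ht] with s hs
    exact hdec t s ht hs.1 hs.2.le
  have hGpsd : ∀ t ∈ I, ∀ M : Matrix (Fin n) (Fin n) ℂ,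
      (M = Q t ∨ (∀ i j, Tendsto (fun s => Q s i j) (𝓝[<] t) (𝓝 (M i j))) ∨
       (∀ i j, Tendsto (fun s => Q s i j) (𝓝[>] t) (𝓝 (M i j)))) →
      M.PosSemidef := by
    intro t ht M hM
    rcases hM with rfl | hM | hM
    · exact hQpsd t ht
    · refine psd_limit hM ?_
      filter_upwards [hevI_lt t ht] with s hs
      exact hQpsd s hs.1
    · refine psd_limit hM ?_
      filter_upwards [hevI_gt t ht] with s hs
      exact hQpsd s hs.1
  have hGcomp : ∀ t1 ∈ I, ∀ t2 ∈ I, ∀ M1 M2 : Matrix (Fin n) (Fin n) ℂ,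
      (M1 = Q t1 ∨ (∀ i j, Tendsto (fun s => Q s i j) (𝓝[<] t1) (𝓝 (M1 i j))) ∨
       (∀ i j, Tendsto (fun s => Q s i j) (𝓝[>] t1) (𝓝 (M1 i j)))) →
      (M2 = Q t2 ∨ (∀ i j, Tendsto (fun s => Q s i j) (𝓝[<] t2) (𝓝 (M2 i j))) ∨
       (∀ i j, Tendsto (fun s => Q s i j) (𝓝[>] t2) (𝓝 (M2 i j)))) →
      LoewnerLE M1 M2 ∨ LoewnerLE M2 M1 := by
    intro t1 ht1 t2 ht2 M1 M2 g1 g2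
    rcases lt_trichotomy t1 t2 with h | h | h
    · have hsI : (t1 + t2) / 2 ∈ I :=
        hIconn.out ht1 ht2 ⟨by linarith, by linarith⟩
      exact Or.inr (loewnerLE_trans
        (hGb t2 ht2 M2 g2 _ hsI (by linarith))
        (hGa t1 ht1 M1 g1 _ hsI (by linarith)))
    · subst h
      rcases g1 with rfl | h1 | h1
      · rcases g2 with rfl | h2 | h2
        · exact Or.inl (loewnerLE_refl _)
        · exact Or.inl (hQleL t1 ht1 M2 h2)
        · exact Or.inr (hRleQ t1 ht1 M2 h2)
      · rcases g2 with rfl | h2 | h2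
        · exact Or.inr (hQleL t1 ht1 M1 h1)
        · have hEq : M1 = M2 := by
            ext i j
            exact tendsto_nhds_unique (h1 i j) (h2 i j)
          exact Or.inl (hEq ▸ loewnerLE_refl M1)
        · exact Or.inr (loewnerLE_trans (hRleQ t1 ht1 M2 h2) (hQleL t1 ht1 M1 h1))
      · rcases g2 with rfl | h2 | h2
        · exact Or.inl (hRleQ t1 ht1 M1 h1)
        · exact Or.inl (loewnerLE_trans (hRleQ t1 ht1 M1 h1) (hQleL t1 ht1 M2 h2))
        · have hEq : M1 = M2 := by
            ext i j
            exact tendsto_nhds_unique (h1 i j) (h2 i j)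
          exact Or.inl (hEq ▸ loewnerLE_refl M1)
    · have hsI : (t1 + t2) / 2 ∈ I :=
        hIconn.out ht2 ht1 ⟨by linarith, by linarith⟩
      exact Or.inl (loewnerLE_trans
        (hGb t1 ht1 M1 g1 _ hsI (by linarith))
        (hGa t2 ht2 M2 g2 _ hsI (by linarith)))
  set S : Set (Matrix (Fin n) (Fin n) ℂ) :=
    {M | ∃ t ∈ I, M = Q t ∨ (∀ i j, Tendsto (fun s => Q s i j) (𝓝[<] t) (𝓝 (M i j))) ∨
      (∀ i j, Tendsto (fun s => Q s i j) (𝓝[>] t) (𝓝 (M i j)))} with hS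
  have hpsdS : ∀ M ∈ S, M.PosSemidef := by
    rintro M ⟨t, ht, hg⟩
    exact hGpsd t ht M hg
  have hcompS : ∀ M ∈ S, ∀ N ∈ S,
      LinearMap.ker M.mulVecLin ≤ LinearMap.ker N.mulVecLin ∨
      LinearMap.ker N.mulVecLin ≤ LinearMap.ker M.mulVecLin := by
    rintro M ⟨t1, ht1, g1⟩ N ⟨t2, ht2, g2⟩
    rcases hGcomp t1 ht1 t2 ht2 M N g1 g2 with h | h
    · exact Or.inr (ker_le_of_loewner (hGpsd t1 ht1 M g1) h)
    · exact Or.inl (ker_le_of_loewner (hGpsd t2 ht2 N g2) h)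
  obtain ⟨V, hVunit, hNSD⟩ := lemmaA n S hpsdS hcompS
  refine ⟨V, hVunit, ?_, ?_⟩
  · intro t ht
    exact hNSD (Q t) ⟨t, ht, Or.inl rfl⟩
  · intro t ht L hL
    refine hNSD L ⟨t, ht, ?_⟩
    rcases hL with h | h
    · exact Or.inr (Or.inl h)
    · exact Or.inr (Or.inr h)


end Paper
end
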